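/- arXiv:2103.14351 — 5 statements merged into one kernel-verified Lean document; each statement's English description precedes it below -/
import Mathlib

section
/- Let α ∈ [0,1] and ε > 0, and for each n ∈ ℕ let B_n be a binomially distributed random variable with parameters n and α. Then Σ_{n≥1} P(B_n > n(α + ε)) < ∞. -/
open Finset

set_option maxHeartbeats 1000000 in
/-- For binomial random variables `B_n ∼ B(n, α)` and `ε > 0`, the series
`Σ_n P(B_n > n(α + ε))` converges; the probability `P(B_n > n(α+ε))` is written
explicitly as `Σ_{k ≤ n, k > n(α+ε)} C(n,k) α^k (1−α)^{n−k}`. -/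
theorem stmt10 (α ε : ℝ) (hα0 : 0 ≤ α) (hα1 : α ≤ 1) (hε : 0 < ε) :
    Summable (fun n : ℕ => ∑ k ∈ Finset.range (n + 1),
      if (n : ℝ) * (α + ε) < (k : ℝ) then (n.choose k : ℝ) * α ^ k * (1 - α) ^ (n - k)
      else 0) := by
  set l : ℝ := min (ε / 2) 1 with hl
  have hl0 : 0 < l := lt_min (by linarith) one_pos
  have hl1 : l ≤ 1 := min_le_right _ _
  have hlε : l ≤ ε / 2 := min_le_left _ _
  set r : ℝ := (α * Real.exp l + (1 - α)) * Real.exp (-(l * (α + ε))) with hr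
  have hbase : (0:ℝ) ≤ α * Real.exp l + (1 - α) := by
    have := mul_nonneg hα0 (Real.exp_pos l).le
    linarith
  have hr0 : 0 ≤ r := mul_nonneg hbase (Real.exp_pos _).le
  -- exp l ≤ 1 + l + l^2
  have hexpl : Real.exp l ≤ 1 + l + l ^ 2 := by
    have h := Real.exp_bound' hl0.le hl1 (n := 2) (by norm_num)
    have h2 : (∑ m ∈ Finset.range 2, l ^ m / m.factorial) = 1 + l := by
      simp [Finset.sum_range_succ]
    rw [h2] at h
    norm_num [Nat.factorial] at h
    linarith [sq_nonneg l]
  have hr1 : r < 1 := by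
    have h1 : α * Real.exp l + (1 - α) ≤ Real.exp (α * l + α * l ^ 2) := by
      have : α * Real.exp l + (1 - α) ≤ 1 + (α * l + α * l ^ 2) := by
        have := mul_le_mul_of_nonneg_left hexpl hα0
        nlinarith
      refine this.trans ?_
      linarith [Real.add_one_le_exp (α * l + α * l ^ 2)]
    calc r ≤ Real.exp (α * l + α * l ^ 2) * Real.exp (-(l * (α + ε))) :=
          mul_le_mul_of_nonneg_right h1 (Real.exp_pos _).le
      _ = Real.exp (α * l + α * l ^ 2 - l * (α + ε)) := by
          rw [← Real.exp_add]; ring_nf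
      _ < 1 := by
          rw [Real.exp_lt_one_iff]
          have h2 : α * l ^ 2 ≤ 1 * l ^ 2 := mul_le_mul_of_nonneg_right hα1 (sq_nonneg l)
          have h3 : l * l ≤ l * (ε / 2) := mul_le_mul_of_nonneg_left hlε hl0.le
          have h4 : 0 < l * ε := mul_pos hl0 hε
          nlinarith
  have hnn : ∀ n : ℕ, 0 ≤ ∑ k ∈ Finset.range (n + 1),
      if (n : ℝ) * (α + ε) < (k : ℝ) then (n.choose k : ℝ) * α ^ k * (1 - α) ^ (n - k)
      else 0 := by
    intro n
    refine Finset.sum_nonneg fun k _ => ?_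
    have h1α : (0:ℝ) ≤ 1 - α := by linarith
    split
    · positivity
    · exact le_rfl
  have hle : ∀ n : ℕ, (∑ k ∈ Finset.range (n + 1),
      if (n : ℝ) * (α + ε) < (k : ℝ) then (n.choose k : ℝ) * α ^ k * (1 - α) ^ (n - k)
      else 0) ≤ r ^ n := by
    intro n
    have hterm : ∀ k ∈ Finset.range (n + 1),
        (if (n : ℝ) * (α + ε) < (k : ℝ) then (n.choose k : ℝ) * α ^ k * (1 - α) ^ (n - k)
          else 0) ≤
        Real.exp (-(l * ((n : ℝ) * (α + ε)))) *
          ((n.choose k : ℝ) * (α * Real.exp l) ^ k * (1 - α) ^ (n - k)) := by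
      intro k hk
      have h1α : (0:ℝ) ≤ 1 - α := by linarith
      split
      · rename_i hcond
        have hkey : α ^ k ≤ Real.exp (-(l * ((n : ℝ) * (α + ε)))) * (α * Real.exp l) ^ k := by
          rw [mul_pow, ← Real.exp_nat_mul]
          have hexp1 : (1:ℝ) ≤ Real.exp (-(l * ((n : ℝ) * (α + ε))) + (k : ℝ) * l) := by
            rw [Real.one_le_exp_iff]
            have := mul_le_mul_of_nonneg_left hcond.le hl0.le
            nlinarith
          calc α ^ k = α ^ k * 1 := (mul_one _).symm
            _ ≤ α ^ k * Real.exp (-(l * ((n : ℝ) * (α + ε))) + (k : ℝ) * l) := by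
                exact mul_le_mul_of_nonneg_left hexp1 (pow_nonneg hα0 k)
            _ = Real.exp (-(l * ((n : ℝ) * (α + ε)))) * (α ^ k * Real.exp ((k : ℝ) * l)) := by
                rw [Real.exp_add]; ring
        calc (n.choose k : ℝ) * α ^ k * (1 - α) ^ (n - k)
            ≤ (n.choose k : ℝ) * (Real.exp (-(l * ((n : ℝ) * (α + ε)))) * (α * Real.exp l) ^ k)
              * (1 - α) ^ (n - k) := by
              have := mul_le_mul_of_nonneg_left hkey (by positivity : (0:ℝ) ≤ (n.choose k : ℝ))
              exact mul_le_mul_of_nonneg_right this (pow_nonneg h1α _)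
          _ = Real.exp (-(l * ((n : ℝ) * (α + ε)))) *
              ((n.choose k : ℝ) * (α * Real.exp l) ^ k * (1 - α) ^ (n - k)) := by ring
      · positivity
    calc (∑ k ∈ Finset.range (n + 1),
          if (n : ℝ) * (α + ε) < (k : ℝ) then (n.choose k : ℝ) * α ^ k * (1 - α) ^ (n - k)
          else 0)
        ≤ ∑ k ∈ Finset.range (n + 1),
            Real.exp (-(l * ((n : ℝ) * (α + ε)))) *
              ((n.choose k : ℝ) * (α * Real.exp l) ^ k * (1 - α) ^ (n - k)) :=
          Finset.sum_le_sum hterm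
      _ = Real.exp (-(l * ((n : ℝ) * (α + ε)))) *
            ∑ k ∈ Finset.range (n + 1),
              (α * Real.exp l) ^ k * (1 - α) ^ (n - k) * (n.choose k : ℝ) := by
          rw [Finset.mul_sum]; congr 1; ext k; ring
      _ = Real.exp (-(l * ((n : ℝ) * (α + ε)))) * (α * Real.exp l + (1 - α)) ^ n := by
          rw [← add_pow]
      _ = r ^ n := by
          rw [hr, mul_pow, ← Real.exp_nat_mul, mul_comm]
          congr 2
          ring
  exact Summable.of_nonneg_of_le hnn hle (summable_geometric_of_lt_one hr0 hr1)
end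

section
/- Let α ∈ [0,1] and let {Z_n : n ≥ 1} be {0,1}-valued random variables with partial sums S_n = Σ_{k=1}^n Z_k. Suppose P(Z_1 = 1) ≤ α and, for every n ≥ 2 and every s with P(S_{n−1} = s) > 0, P(Z_n = 1 ∣ S_{n−1} = s) ≤ α. Then for every n ≥ 1 and every l ∈ {0,…,n}, P(S_n ≥ l) ≤ P(B_n ≥ l), where B_n ∼ B(n, α) is binomially distributed with parameters n and α. -/
open Finset Filter MeasureTheory

lemma binom_total (α : ℝ) (n : ℕ) :
    ∑ k ∈ Icc 0 n, (n.choose k : ℝ) * α ^ k * (1 - α) ^ (n - k) = 1 := by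
  calc ∑ k ∈ Icc 0 n, (n.choose k : ℝ) * α ^ k * (1 - α) ^ (n - k)
      = ∑ k ∈ range (n+1), α ^ k * (1 - α) ^ (n - k) * (n.choose k : ℝ) := by
        rw [show Icc 0 n = range (n+1) from by ext x; simp [Nat.lt_succ_iff]]
        exact sum_congr rfl fun k _ => by ring
    _ = (α + (1 - α)) ^ n := (add_pow α (1-α) n).symm
    _ = 1 := by norm_num

lemma binom_step (α : ℝ) (n m : ℕ) :
    ∑ k ∈ Icc (m+1) (n+1), ((n+1).choose k : ℝ) * α ^ k * (1 - α) ^ (n + 1 - k)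
    = (1 - α) * ∑ k ∈ Icc (m+1) n, (n.choose k : ℝ) * α ^ k * (1 - α) ^ (n - k)
      + α * ∑ k ∈ Icc m n, (n.choose k : ℝ) * α ^ k * (1 - α) ^ (n - k) := by
  have hshift : ∀ f : ℕ → ℝ, ∑ k ∈ Icc (m+1) (n+1), f k = ∑ j ∈ Icc m n, f (j+1) := by
    intro f; rw [← Finset.map_add_right_Icc m n 1, Finset.sum_map]; rfl
  rcases le_or_gt m n with h | h
  · have h2 : ∑ j ∈ Icc m n, (n.choose (j+1) : ℝ) * α ^ (j+1) * (1 - α) ^ (n - j)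
        = (1 - α) * ∑ k ∈ Icc (m+1) n, (n.choose k : ℝ) * α ^ k * (1 - α) ^ (n - k) := by
      calc ∑ j ∈ Icc m n, (n.choose (j+1) : ℝ) * α ^ (j+1) * (1 - α) ^ (n - j)
          = ∑ k ∈ Icc (m+1) (n+1), (n.choose k : ℝ) * α ^ k * (1 - α) ^ (n + 1 - k) := by
            rw [hshift]
            exact sum_congr rfl fun j _ => by rw [Nat.succ_sub_succ]
        _ = ∑ k ∈ Icc (m+1) n, (n.choose k : ℝ) * α ^ k * (1 - α) ^ (n + 1 - k)
            + (n.choose (n+1) : ℝ) * α ^ (n+1) * (1 - α) ^ (n + 1 - (n+1)) :=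
            Finset.sum_Icc_succ_top (by omega) _
        _ = ∑ k ∈ Icc (m+1) n, (1 - α) * ((n.choose k : ℝ) * α ^ k * (1 - α) ^ (n - k)) := by
            rw [Nat.choose_succ_self]
            push_cast
            rw [zero_mul, zero_mul, add_zero]
            refine sum_congr rfl fun k hk => ?_
            have hk' : k ≤ n := (mem_Icc.1 hk).2
            rw [show n + 1 - k = (n - k) + 1 from by omega]
            ring
        _ = (1 - α) * ∑ k ∈ Icc (m+1) n, (n.choose k : ℝ) * α ^ k * (1 - α) ^ (n - k) := by
            rw [Finset.mul_sum]
    calc ∑ k ∈ Icc (m+1) (n+1), ((n+1).choose k : ℝ) * α ^ k * (1 - α) ^ (n + 1 - k)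
        = ∑ j ∈ Icc m n, (α * ((n.choose j : ℝ) * α ^ j * (1 - α) ^ (n - j))
            + (n.choose (j+1) : ℝ) * α ^ (j+1) * (1 - α) ^ (n - j)) := by
          rw [hshift]
          refine sum_congr rfl fun j _ => ?_
          rw [Nat.succ_sub_succ]
          have : ((n+1).choose (j+1) : ℝ) = n.choose j + n.choose (j+1) := by
            rw [Nat.choose_succ_succ]; push_cast; ring
          rw [this]; ring
      _ = α * ∑ j ∈ Icc m n, (n.choose j : ℝ) * α ^ j * (1 - α) ^ (n - j)
          + ∑ j ∈ Icc m n, (n.choose (j+1) : ℝ) * α ^ (j+1) * (1 - α) ^ (n - j) := by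
          rw [Finset.sum_add_distrib, Finset.mul_sum]
      _ = _ := by rw [h2]; ring
  · rw [Icc_eq_empty (by omega), Icc_eq_empty (by omega), Icc_eq_empty (by omega)]
    simp

/-- Stochastic domination of a conditionally-bounded sum of indicator variables by
a binomial distribution: if `P(Z_1 = 1) ≤ α` and `P(Z_n = 1 ∣ S_{n−1} = s) ≤ α`
whenever `P(S_{n−1} = s) > 0`, then `P(S_n ≥ l) ≤ P(B_n ≥ l)` for `B_n ∼ B(n, α)`. -/
theorem stmt11 (α : ℝ) (hα0 : 0 ≤ α) (hα1 : α ≤ 1)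
    (Ω : Type) [MeasurableSpace Ω] (μ : Measure Ω) [IsProbabilityMeasure μ]
    (Z : ℕ → Ω → ℕ) (hZm : ∀ n, Measurable (Z n))
    (hZ01 : ∀ n, 1 ≤ n → ∀ ω, Z n ω = 0 ∨ Z n ω = 1)
    (hZ1 : μ {ω | Z 1 ω = 1} ≤ ENNReal.ofReal α)
    -- `P(Z_n = 1 ∧ S_{n−1} = s) ≤ α ⬝ P(S_{n−1} = s)`, i.e. the conditional bound
    (hZcond : ∀ n, 2 ≤ n → ∀ s : ℕ,
      μ {ω | Z n ω = 1 ∧ ∑ k ∈ Finset.Icc 1 (n - 1), Z k ω = s}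
        ≤ ENNReal.ofReal α * μ {ω | ∑ k ∈ Finset.Icc 1 (n - 1), Z k ω = s}) :
    ∀ n, 1 ≤ n → ∀ l ≤ n,
      (μ {ω | l ≤ ∑ k ∈ Finset.Icc 1 n, Z k ω}).toReal
        ≤ ∑ k ∈ Finset.Icc l n, (n.choose k : ℝ) * α ^ k * (1 - α) ^ (n - k) := by
  have hSm : ∀ n : ℕ, Measurable (fun ω => ∑ k ∈ Finset.Icc 1 n, Z k ω) :=
    fun n => Finset.measurable_sum _ fun k _ => hZm k
  have hone : ∀ (s : Set Ω), (μ s).toReal ≤ 1 := fun s => by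
    simpa using ENNReal.toReal_mono ENNReal.one_ne_top (prob_le_one (μ := μ) (s := s))
  suffices H : ∀ n, 1 ≤ n → ∀ l : ℕ,
      (μ {ω | l ≤ ∑ k ∈ Finset.Icc 1 n, Z k ω}).toReal
        ≤ ∑ k ∈ Finset.Icc l n, (n.choose k : ℝ) * α ^ k * (1 - α) ^ (n - k) by
    intro n hn l _; exact H n hn l
  intro n hn
  induction n, hn using Nat.le_induction with
  | base =>
    intro l
    match l with
    | 0 => rw [binom_total]; exact hone _
    | 1 =>
      have hset : {ω | 1 ≤ ∑ k ∈ Finset.Icc 1 1, Z k ω} ⊆ {ω | Z 1 ω = 1} := by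
        intro ω hω
        simp only [Finset.Icc_self, Finset.sum_singleton, Set.mem_setOf_eq] at hω ⊢
        rcases hZ01 1 le_rfl ω with h | h
        · omega
        · exact h
      have h1 : (μ {ω | 1 ≤ ∑ k ∈ Finset.Icc 1 1, Z k ω}).toReal ≤ α := by
        have := (measure_mono hset).trans hZ1
        have h2 := ENNReal.toReal_mono ENNReal.ofReal_ne_top this
        rwa [ENNReal.toReal_ofReal hα0] at h2
      refine h1.trans ?_
      simp [Finset.Icc_self]
    | (m+2) =>
      have hempty : {ω | m + 2 ≤ ∑ k ∈ Finset.Icc 1 1, Z k ω} = ∅ := by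
        ext ω
        simp only [Finset.Icc_self, Finset.sum_singleton, Set.mem_setOf_eq,
          Set.mem_empty_iff_false, iff_false]
        rcases hZ01 1 le_rfl ω with h | h <;> omega
      rw [hempty, Finset.Icc_eq_empty (by omega)]
      simp
  | succ n hn IH =>
    intro l
    match l with
    | 0 => rw [binom_total]; exact hone _
    | (m+1) =>
      have hsum : ∀ ω, ∑ k ∈ Finset.Icc 1 (n+1), Z k ω
          = (∑ k ∈ Finset.Icc 1 n, Z k ω) + Z (n+1) ω :=
        fun ω => Finset.sum_Icc_succ_top (by omega) _
      have hZn : ∀ ω, Z (n+1) ω = 0 ∨ Z (n+1) ω = 1 := hZ01 (n+1) (by omega)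
      have hAm : MeasurableSet {ω | m + 1 ≤ ∑ k ∈ Finset.Icc 1 n, Z k ω} :=
        measurableSet_le measurable_const (hSm n)
      have hBm : MeasurableSet {ω | Z (n+1) ω = 1 ∧ ∑ k ∈ Finset.Icc 1 n, Z k ω = m} :=
        ((hZm (n+1)) (measurableSet_singleton 1)).inter ((hSm n) (measurableSet_singleton m))
      have hdecomp : {ω | m + 1 ≤ ∑ k ∈ Finset.Icc 1 (n+1), Z k ω}
          = {ω | m + 1 ≤ ∑ k ∈ Finset.Icc 1 n, Z k ω}
            ∪ {ω | Z (n+1) ω = 1 ∧ ∑ k ∈ Finset.Icc 1 n, Z k ω = m} := by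
        ext ω
        simp only [Set.mem_setOf_eq, Set.mem_union, hsum ω]
        rcases hZn ω with h | h <;> rw [h] <;> omega
      have hdisj : Disjoint {ω | m + 1 ≤ ∑ k ∈ Finset.Icc 1 n, Z k ω}
          {ω | Z (n+1) ω = 1 ∧ ∑ k ∈ Finset.Icc 1 n, Z k ω = m} := by
        rw [Set.disjoint_left]
        intro ω hA hB
        simp only [Set.mem_setOf_eq] at hA hB
        omega
      have hμ : μ ({ω | m + 1 ≤ ∑ k ∈ Finset.Icc 1 n, Z k ω}
            ∪ {ω | Z (n+1) ω = 1 ∧ ∑ k ∈ Finset.Icc 1 n, Z k ω = m})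
          = μ {ω | m + 1 ≤ ∑ k ∈ Finset.Icc 1 n, Z k ω}
            + μ {ω | Z (n+1) ω = 1 ∧ ∑ k ∈ Finset.Icc 1 n, Z k ω = m} :=
        measure_union hdisj hBm
      have hcond := hZcond (n+1) (by omega) m
      simp only [Nat.add_sub_cancel] at hcond
      have hsplit : μ {ω | m ≤ ∑ k ∈ Finset.Icc 1 n, Z k ω}
          = μ {ω | ∑ k ∈ Finset.Icc 1 n, Z k ω = m}
            + μ {ω | m + 1 ≤ ∑ k ∈ Finset.Icc 1 n, Z k ω} := by
        rw [← measure_union ?_ hAm]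
        · congr 1
          ext ω
          simp only [Set.mem_setOf_eq, Set.mem_union]
          omega
        · rw [Set.disjoint_left]
          intro ω h1 h2
          simp only [Set.mem_setOf_eq] at h1 h2
          omega
      -- pass to real numbers
      set a := (μ {ω | m + 1 ≤ ∑ k ∈ Finset.Icc 1 n, Z k ω}).toReal with ha
      set c := (μ {ω | m ≤ ∑ k ∈ Finset.Icc 1 n, Z k ω}).toReal with hc
      set p := (μ {ω | ∑ k ∈ Finset.Icc 1 n, Z k ω = m}).toReal with hp
      set q := (μ {ω | Z (n+1) ω = 1 ∧ ∑ k ∈ Finset.Icc 1 n, Z k ω = m}).toReal with hq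
      have hcr : c = p + a := by
        rw [hc, hp, ha, hsplit, ENNReal.toReal_add (measure_ne_top μ _) (measure_ne_top μ _)]
      have hqr : q ≤ α * p := by
        have h2 := ENNReal.toReal_mono
          (ENNReal.mul_ne_top ENNReal.ofReal_ne_top (measure_ne_top μ _)) hcond
        rwa [ENNReal.toReal_mul, ENNReal.toReal_ofReal hα0] at h2
      have hLHS : (μ {ω | m + 1 ≤ ∑ k ∈ Finset.Icc 1 (n+1), Z k ω}).toReal = a + q := by
        rw [hdecomp, hμ, ENNReal.toReal_add (measure_ne_top μ _) (measure_ne_top μ _)]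
      rw [hLHS, binom_step]
      have hB1 := IH (m+1)
      have hB2 := IH m
      nlinarith [mul_le_mul_of_nonneg_left hB1 (by linarith : (0:ℝ) ≤ 1 - α),
        mul_le_mul_of_nonneg_left hB2 hα0]
end

section
/- Let α ∈ [0,1] and let {Z_n : n ≥ 1} be {0,1}-valued random variables with partial sums S_n = Σ_{k=1}^n Z_k. Suppose P(Z_1 = 1) ≤ α and, for every n ≥ 2 and every s with P(S_{n−1} = s) > 0, P(Z_n = 1 ∣ S_{n−1} = s) ≤ α. Then P(limsup_{n→∞} S_n/n > α) = 0. -/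
open Finset Filter MeasureTheory Topology
open scoped ENNReal


lemma exists_good_lambda (α β : ℝ) (hα : 0 ≤ α) (hβ : α < β) :
    ∃ l : ℝ, 1 < l ∧ 1 + (l - 1) * α < l ^ β := by
  set g : ℝ → ℝ := fun x => x ^ β - (1 + (x - 1) * α) with hg
  have hd : HasDerivAt g (β - α) 1 := by
    have h1 : HasDerivAt (fun x : ℝ => x ^ β) (β * (1:ℝ) ^ (β - 1)) 1 :=
      Real.hasDerivAt_rpow_const (Or.inl one_ne_zero)
    have h2 : HasDerivAt (fun x : ℝ => 1 + (x - 1) * α) α 1 := by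
      simpa using (((hasDerivAt_id (1:ℝ)).sub_const 1).mul_const α).const_add 1
    have h3 := h1.sub h2
    simp only [Real.one_rpow, mul_one] at h3
    exact h3
  have hslope : Tendsto (slope g 1) (𝓝[>] 1) (𝓝 (β - α)) :=
    (hasDerivAt_iff_tendsto_slope.mp hd).mono_left
      (nhdsWithin_mono 1 (fun x hx => ne_of_gt hx))
  have hev : ∀ᶠ x in 𝓝[>] (1:ℝ), 0 < slope g 1 x :=
    hslope.eventually (eventually_gt_nhds (by linarith))
  have hev2 : ∀ᶠ x in 𝓝[>] (1:ℝ), 1 < x := eventually_mem_nhdsWithin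
  obtain ⟨x, hx1, hx2⟩ := (hev.and hev2).exists
  refine ⟨x, hx2, ?_⟩
  have hs : slope g 1 x = g x / (x - 1) := by
    simp [slope, hg, vsub_eq_sub]; ring
  have : 0 < g x := by
    have := mul_pos hx1 (sub_pos.mpr hx2)
    rw [hs, div_mul_cancel₀] at this
    · exact this
    · exact ne_of_gt (sub_pos.mpr hx2)
  simpa [hg, sub_pos] using this


lemma moment_bound {Ω : Type} [MeasurableSpace Ω] (μ : Measure Ω) [IsProbabilityMeasure μ]
    (α : ℝ) (Z : ℕ → Ω → ℕ) (hZm : ∀ n, Measurable (Z n))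
    (hZ01 : ∀ n, 1 ≤ n → ∀ ω, Z n ω = 0 ∨ Z n ω = 1)
    (hZ1 : μ {ω | Z 1 ω = 1} ≤ ENNReal.ofReal α)
    (hZcond : ∀ n, 2 ≤ n → ∀ s : ℕ,
      μ {ω | Z n ω = 1 ∧ ∑ k ∈ Finset.Icc 1 (n - 1), Z k ω = s}
        ≤ ENNReal.ofReal α * μ {ω | ∑ k ∈ Finset.Icc 1 (n - 1), Z k ω = s})
    (l : ℝ≥0∞) (hl : 1 ≤ l) (n : ℕ) :
    ∑ s ∈ range (n+1), l^s * μ {ω | ∑ k ∈ Icc 1 n, Z k ω = s}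
      ≤ (1 + (l - 1) * ENNReal.ofReal α)^n := by
  -- S n is measurable
  have hSm : ∀ m : ℕ, Measurable (fun ω => ∑ k ∈ Icc 1 m, Z k ω) :=
    fun m => Finset.measurable_sum _ (fun k _ => hZm k)
  -- S n ≤ n
  have hSle : ∀ (m : ℕ) (ω : Ω), ∑ k ∈ Icc 1 m, Z k ω ≤ m := by
    intro m ω
    calc ∑ k ∈ Icc 1 m, Z k ω ≤ ∑ k ∈ Icc 1 m, 1 := by
          refine Finset.sum_le_sum (fun k hk => ?_)
          rcases hZ01 k (mem_Icc.mp hk).1 ω with h | h <;> omega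
      _ = m := by simp [Nat.card_Icc]
  induction n with
  | zero =>
    rw [Finset.sum_range_one]
    have h : {ω : Ω | ∑ k ∈ Icc 1 0, Z k ω = 0} = Set.univ := by
      ext ω; simp
    rw [h, measure_univ]
    simp
  | succ n ih =>
    set c : ℝ≥0∞ := 1 + (l - 1) * ENNReal.ofReal α with hc
    -- key partition of {S (n+1) = s}
    have hsplit : ∀ s : ℕ,
        μ {ω | ∑ k ∈ Icc 1 (n+1), Z k ω = s}
          = μ {ω | Z (n+1) ω = 1 ∧ (∑ k ∈ Icc 1 n, Z k ω) + 1 = s}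
            + μ {ω | Z (n+1) ω = 0 ∧ ∑ k ∈ Icc 1 n, Z k ω = s} := by
      intro s
      have hSrec : ∀ ω, ∑ k ∈ Icc 1 (n+1), Z k ω = (∑ k ∈ Icc 1 n, Z k ω) + Z (n+1) ω :=
        fun ω => Finset.sum_Icc_succ_top (by omega) _
      have hset : {ω | ∑ k ∈ Icc 1 (n+1), Z k ω = s}
          = {ω | Z (n+1) ω = 1 ∧ (∑ k ∈ Icc 1 n, Z k ω) + 1 = s}
            ∪ {ω | Z (n+1) ω = 0 ∧ ∑ k ∈ Icc 1 n, Z k ω = s} := by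
        ext ω
        simp only [Set.mem_setOf_eq, Set.mem_union, hSrec ω]
        rcases hZ01 (n+1) (by omega) ω with h | h <;> simp [h] <;> omega
      rw [hset, measure_union]
      · rw [Set.disjoint_left]
        rintro ω ⟨h1, -⟩ ⟨h0, -⟩; omega
      · exact ((hZm (n+1)) (measurableSet_singleton 0)).inter
          ((hSm n) (measurableSet_singleton s))
    -- abbreviations
    set P1 : ℕ → ℝ≥0∞ := fun t => μ {ω | Z (n+1) ω = 1 ∧ ∑ k ∈ Icc 1 n, Z k ω = t} with hP1
    set P0 : ℕ → ℝ≥0∞ := fun t => μ {ω | Z (n+1) ω = 0 ∧ ∑ k ∈ Icc 1 n, Z k ω = t} with hP0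
    set Q : ℕ → ℝ≥0∞ := fun t => μ {ω | ∑ k ∈ Icc 1 n, Z k ω = t} with hQ
    -- first sum reindex
    have hsum1 : ∑ s ∈ range (n+2),
        l^s * μ {ω | Z (n+1) ω = 1 ∧ (∑ k ∈ Icc 1 n, Z k ω) + 1 = s}
        = l * ∑ t ∈ range (n+1), l^t * P1 t := by
      rw [Finset.sum_range_succ'
        (fun s => l^s * μ {ω | Z (n+1) ω = 1 ∧ (∑ k ∈ Icc 1 n, Z k ω) + 1 = s}) (n+1)]
      have h0 : {ω : Ω | Z (n+1) ω = 1 ∧ (∑ k ∈ Icc 1 n, Z k ω) + 1 = 0} = ∅ := by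
        ext ω; simp
      rw [h0]
      simp only [measure_empty, mul_zero, add_zero, pow_zero]
      rw [Finset.mul_sum]
      refine Finset.sum_congr rfl (fun t ht => ?_)
      have : {ω : Ω | Z (n+1) ω = 1 ∧ (∑ k ∈ Icc 1 n, Z k ω) + 1 = t + 1}
          = {ω | Z (n+1) ω = 1 ∧ ∑ k ∈ Icc 1 n, Z k ω = t} := by
        ext ω; simp only [Set.mem_setOf_eq]; omega
      rw [this, hP1, pow_succ]
      ring
    -- second sum: drop last term
    have hsum0 : ∑ s ∈ range (n+2),
        l^s * μ {ω | Z (n+1) ω = 0 ∧ ∑ k ∈ Icc 1 n, Z k ω = s}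
        = ∑ t ∈ range (n+1), l^t * P0 t := by
      rw [Finset.sum_range_succ]
      have h0 : {ω : Ω | Z (n+1) ω = 0 ∧ ∑ k ∈ Icc 1 n, Z k ω = n + 1} = ∅ := by
        ext ω
        simp only [Set.mem_setOf_eq, Set.mem_empty_iff_false, iff_false, not_and]
        intro _
        have := hSle n ω; omega
      rw [h0]
      simp [hP0]
    -- Q = P1 + P0
    have hQsplit : ∀ t, Q t = P1 t + P0 t := by
      intro t
      have hset : {ω | ∑ k ∈ Icc 1 n, Z k ω = t}
          = {ω | Z (n+1) ω = 1 ∧ ∑ k ∈ Icc 1 n, Z k ω = t}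
            ∪ {ω | Z (n+1) ω = 0 ∧ ∑ k ∈ Icc 1 n, Z k ω = t} := by
        ext ω
        simp only [Set.mem_setOf_eq, Set.mem_union]
        rcases hZ01 (n+1) (by omega) ω with h | h <;> simp [h]
      simp only [hQ, hP1, hP0]
      rw [hset, measure_union]
      · rw [Set.disjoint_left]
        rintro ω ⟨h1, -⟩ ⟨h0, -⟩; omega
      · exact ((hZm (n+1)) (measurableSet_singleton 0)).inter
          ((hSm n) (measurableSet_singleton t))
    -- conditional bound: P1 t ≤ α * Q t
    have hcond : ∀ t, P1 t ≤ ENNReal.ofReal α * Q t := by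
      intro t
      rcases Nat.eq_zero_or_pos n with hn | hn
      · subst hn
        rcases Nat.eq_zero_or_pos t with ht | ht
        · subst ht
          have h1 : {ω : Ω | Z 1 ω = 1 ∧ ∑ k ∈ Icc 1 0, Z k ω = 0} = {ω | Z 1 ω = 1} := by
            ext ω; simp
          have h2 : {ω : Ω | ∑ k ∈ Icc 1 0, Z k ω = 0} = Set.univ := by
            ext ω; simp
          rw [hP1, hQ]
          simp only [h1, h2, measure_univ, mul_one]
          exact hZ1
        · have h1 : {ω : Ω | Z 1 ω = 1 ∧ ∑ k ∈ Icc 1 0, Z k ω = t} = ∅ := by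
            ext ω
            simp only [Set.mem_setOf_eq, Set.mem_empty_iff_false, iff_false, not_and]
            rintro - h2
            simp at h2
            omega
          simp only [hP1, h1, measure_empty]
          exact zero_le
      · have := hZcond (n+1) (by omega) t
        simpa [Nat.add_sub_cancel] using this
    -- assemble
    have key : ∑ s ∈ range (n+2), l^s * μ {ω | ∑ k ∈ Icc 1 (n+1), Z k ω = s}
        = (∑ t ∈ range (n+1), l^t * Q t) + (l - 1) * ∑ t ∈ range (n+1), l^t * P1 t := by
      have e1 : ∑ s ∈ range (n+2), l^s * μ {ω | ∑ k ∈ Icc 1 (n+1), Z k ω = s}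
          = l * (∑ t ∈ range (n+1), l^t * P1 t) + ∑ t ∈ range (n+1), l^t * P0 t := by
        rw [← hsum1, ← hsum0, ← Finset.sum_add_distrib]
        refine Finset.sum_congr rfl (fun s _ => ?_)
        rw [hsplit s, mul_add]
      rw [e1]
      have e2 : l * (∑ t ∈ range (n+1), l^t * P1 t)
          = (∑ t ∈ range (n+1), l^t * P1 t) + (l - 1) * ∑ t ∈ range (n+1), l^t * P1 t := by
        nth_rewrite 1 [← tsub_add_cancel_of_le hl]
        rw [add_mul, one_mul, add_comm]
      rw [e2]
      have e3 : ∑ t ∈ range (n+1), l^t * Q t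
          = (∑ t ∈ range (n+1), l^t * P1 t) + ∑ t ∈ range (n+1), l^t * P0 t := by
        rw [← Finset.sum_add_distrib]
        refine Finset.sum_congr rfl (fun t _ => ?_)
        rw [hQsplit t, mul_add]
      rw [e3]
      ring
    rw [key]
    have hG1 : ∑ t ∈ range (n+1), l^t * P1 t
        ≤ ENNReal.ofReal α * ∑ t ∈ range (n+1), l^t * Q t := by
      rw [Finset.mul_sum]
      refine Finset.sum_le_sum (fun t _ => ?_)
      calc l^t * P1 t ≤ l^t * (ENNReal.ofReal α * Q t) :=
            mul_le_mul_right (hcond t) _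
        _ = ENNReal.ofReal α * (l^t * Q t) := by ring
    calc (∑ t ∈ range (n+1), l^t * Q t) + (l - 1) * ∑ t ∈ range (n+1), l^t * P1 t
        ≤ (∑ t ∈ range (n+1), l^t * Q t)
          + (l - 1) * (ENNReal.ofReal α * ∑ t ∈ range (n+1), l^t * Q t) :=
          add_le_add_right (mul_le_mul_right hG1 _) _
      _ = c * ∑ t ∈ range (n+1), l^t * Q t := by rw [hc]; ring
      _ ≤ c * c^n := mul_le_mul_right ih _
      _ = c^(n+1) := by rw [pow_succ]; ring


lemma markov_bound {Ω : Type} [MeasurableSpace Ω] (μ : Measure Ω)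
    (Z : ℕ → Ω → ℕ) (hZm : ∀ n, Measurable (Z n))
    (hZ01 : ∀ n, 1 ≤ n → ∀ ω, Z n ω = 0 ∨ Z n ω = 1)
    (l : ℝ≥0∞) (hl : 1 ≤ l) (n m : ℕ) :
    l ^ m * μ {ω | m ≤ ∑ k ∈ Icc 1 n, Z k ω}
      ≤ ∑ s ∈ range (n+1), l^s * μ {ω | ∑ k ∈ Icc 1 n, Z k ω = s} := by
  have hSle : ∀ ω : Ω, ∑ k ∈ Icc 1 n, Z k ω ≤ n := by
    intro ω
    calc ∑ k ∈ Icc 1 n, Z k ω ≤ ∑ k ∈ Icc 1 n, 1 := by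
          refine Finset.sum_le_sum (fun k hk => ?_)
          rcases hZ01 k (mem_Icc.mp hk).1 ω with h | h <;> omega
      _ = n := by simp [Nat.card_Icc]
  set I : Finset ℕ := (range (n+1)).filter (fun s => m ≤ s) with hI
  have hset : {ω : Ω | m ≤ ∑ k ∈ Icc 1 n, Z k ω}
      = ⋃ s ∈ I, {ω | ∑ k ∈ Icc 1 n, Z k ω = s} := by
    ext ω
    simp only [Set.mem_setOf_eq, Set.mem_iUnion, hI, mem_filter, mem_range]
    constructor
    · intro h
      exact ⟨∑ k ∈ Icc 1 n, Z k ω, ⟨Nat.lt_succ_of_le (hSle ω), h⟩, rfl⟩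
    · rintro ⟨s, ⟨-, hs⟩, h⟩
      omega
  rw [hset, measure_biUnion_finset]
  · rw [Finset.mul_sum]
    calc ∑ s ∈ I, l ^ m * μ {ω | ∑ k ∈ Icc 1 n, Z k ω = s}
        ≤ ∑ s ∈ I, l ^ s * μ {ω | ∑ k ∈ Icc 1 n, Z k ω = s} := by
          refine Finset.sum_le_sum (fun s hs => ?_)
          exact mul_le_mul_left (pow_le_pow_right' hl (mem_filter.mp hs).2) _
      _ ≤ ∑ s ∈ range (n+1), l ^ s * μ {ω | ∑ k ∈ Icc 1 n, Z k ω = s} :=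
          Finset.sum_le_sum_of_subset (Finset.filter_subset _ _)
  · intro s _ t _ hst
    rw [Function.onFun, Set.disjoint_left]
    rintro ω h1 h2
    simp only [Set.mem_setOf_eq] at h1 h2
    omega
  · exact fun s _ =>
      (Finset.measurable_sum _ (fun k _ => hZm k)) (measurableSet_singleton s)

/-- One-sided strong law for conditionally-bounded indicator variables: if
`P(Z_1 = 1) ≤ α` and `P(Z_n = 1 ∣ S_{n−1} = s) ≤ α` whenever `P(S_{n−1} = s) > 0`,
then `P(limsup_{n→∞} S_n/n > α) = 0`. -/
theorem stmt12 (α : ℝ) (hα0 : 0 ≤ α) (hα1 : α ≤ 1)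
    (Ω : Type) [MeasurableSpace Ω] (μ : Measure Ω) [IsProbabilityMeasure μ]
    (Z : ℕ → Ω → ℕ) (hZm : ∀ n, Measurable (Z n))
    (hZ01 : ∀ n, 1 ≤ n → ∀ ω, Z n ω = 0 ∨ Z n ω = 1)
    (hZ1 : μ {ω | Z 1 ω = 1} ≤ ENNReal.ofReal α)
    -- `P(Z_n = 1 ∧ S_{n−1} = s) ≤ α ⬝ P(S_{n−1} = s)`, i.e. the conditional bound
    (hZcond : ∀ n, 2 ≤ n → ∀ s : ℕ,
      μ {ω | Z n ω = 1 ∧ ∑ k ∈ Finset.Icc 1 (n - 1), Z k ω = s}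
        ≤ ENNReal.ofReal α * μ {ω | ∑ k ∈ Finset.Icc 1 (n - 1), Z k ω = s}) :
    μ {ω | α < limsup (fun n : ℕ =>
        ((∑ k ∈ Finset.Icc 1 n, Z k ω : ℕ) : ℝ) / (n : ℝ)) atTop} = 0 := by
  -- the a.e. bound for each β > α
  have perbeta : ∀ β : ℝ, α < β →
      ∀ᵐ ω ∂μ, limsup (fun n : ℕ =>
        ((∑ k ∈ Finset.Icc 1 n, Z k ω : ℕ) : ℝ) / (n : ℝ)) atTop ≤ β := by
    intro β hβ
    obtain ⟨l, hl1, hlb⟩ := exists_good_lambda α β hα0 hβ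
    have hl0 : 0 < l := by linarith
    set L : ℝ≥0∞ := ENNReal.ofReal l with hL
    have hL1 : 1 ≤ L := by
      rw [hL, ENNReal.one_le_ofReal]; linarith
    set c : ℝ≥0∞ := 1 + (L - 1) * ENNReal.ofReal α with hc
    have hcR : c = ENNReal.ofReal (1 + (l - 1) * α) := by
      rw [hc, hL, ENNReal.ofReal_add (by norm_num) (mul_nonneg (by linarith) hα0),
        ENNReal.ofReal_one, ENNReal.ofReal_mul (by linarith),
        ENNReal.ofReal_sub l (by norm_num : (0:ℝ) ≤ 1), ENNReal.ofReal_one]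
    have hLβ : L ^ β = ENNReal.ofReal (l ^ β) := ENNReal.ofReal_rpow_of_pos hl0
    have hLβ0 : L ^ β ≠ 0 := by
      rw [hLβ]
      exact ne_of_gt (ENNReal.ofReal_pos.mpr (Real.rpow_pos_of_pos hl0 β))
    have hLβtop : L ^ β ≠ ⊤ := by rw [hLβ]; exact ENNReal.ofReal_ne_top
    have hclt : c < L ^ β := by
      rw [hcR, hLβ]
      exact (ENNReal.ofReal_lt_ofReal_iff (Real.rpow_pos_of_pos hl0 β)).mpr hlb
    set r : ℝ≥0∞ := c / L ^ β with hr
    have hr1 : r < 1 := by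
      rw [hr, div_eq_mul_inv]
      calc c * (L ^ β)⁻¹ < L ^ β * (L ^ β)⁻¹ := by
            exact (ENNReal.mul_lt_mul_left (ENNReal.inv_ne_zero.mpr hLβtop)
              (ENNReal.inv_ne_top.mpr hLβ0) hclt)
        _ = 1 := ENNReal.mul_inv_cancel hLβ0 hLβtop
    set A : ℕ → Set Ω := fun n =>
      {ω | β ≤ ((∑ k ∈ Finset.Icc 1 n, Z k ω : ℕ) : ℝ) / (n : ℝ)} with hA
    have hAbound : ∀ n : ℕ, μ (A n) ≤ r ^ n := by
      intro n
      rcases Nat.eq_zero_or_pos n with hn | hn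
      · subst hn
        rw [pow_zero]
        exact prob_le_one
      · have hn' : (0:ℝ) < n := by exact_mod_cast hn
        have hAeq : A n = {ω | ⌈β * (n:ℝ)⌉₊ ≤ ∑ k ∈ Finset.Icc 1 n, Z k ω} := by
          rw [hA]
          ext ω
          simp only [Set.mem_setOf_eq]
          rw [le_div_iff₀ hn', Nat.ceil_le]
        have h1 : L ^ (⌈β * (n:ℝ)⌉₊) * μ (A n) ≤ c ^ n := by
          rw [hAeq]
          exact le_trans (markov_bound μ Z hZm hZ01 L hL1 n _)
            (moment_bound μ α Z hZm hZ01 hZ1 hZcond L hL1 n)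
        have h2 : (L ^ β) ^ n ≤ L ^ (⌈β * (n:ℝ)⌉₊) := by
          rw [← ENNReal.rpow_natCast (L ^ β) n, ← ENNReal.rpow_mul,
            ← ENNReal.rpow_natCast L (⌈β * (n:ℝ)⌉₊)]
          exact ENNReal.rpow_le_rpow_of_exponent_le hL1 (Nat.le_ceil _)
        have h3 : μ (A n) * (L ^ β) ^ n ≤ c ^ n := by
          calc μ (A n) * (L ^ β) ^ n ≤ μ (A n) * L ^ (⌈β * (n:ℝ)⌉₊) :=
                mul_le_mul_right h2 _
            _ = L ^ (⌈β * (n:ℝ)⌉₊) * μ (A n) := mul_comm _ _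
            _ ≤ c ^ n := h1
        have h4 : μ (A n) ≤ c ^ n / (L ^ β) ^ n :=
          (ENNReal.le_div_iff_mul_le (Or.inl (pow_ne_zero n hLβ0))
            (Or.inl (ENNReal.pow_ne_top hLβtop))).mpr h3
        have h5 : c ^ n / (L ^ β) ^ n = r ^ n := by
          rw [hr, div_eq_mul_inv, div_eq_mul_inv, mul_pow, ENNReal.inv_pow]
        rw [← h5]
        exact h4
    have hsum : (∑' n : ℕ, μ (A n)) ≠ ⊤ := by
      refine ne_top_of_le_ne_top ?_ (ENNReal.tsum_le_tsum hAbound)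
      rw [ENNReal.tsum_geometric]
      rw [Ne, ENNReal.inv_eq_top, tsub_eq_zero_iff_le]
      exact not_le.mpr hr1
    have hev := MeasureTheory.ae_eventually_notMem hsum
    filter_upwards [hev] with ω hω
    refine Filter.limsup_le_of_le ?_ ?_
    · refine Filter.isCoboundedUnder_le_of_le atTop (x := 0) (fun n => by positivity)
    · filter_upwards [hω] with n hn
      exact le_of_lt (not_le.mp hn)
  have main : ∀ᵐ ω ∂μ, limsup (fun n : ℕ =>
      ((∑ k ∈ Finset.Icc 1 n, Z k ω : ℕ) : ℝ) / (n : ℝ)) atTop ≤ α := by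
    have h := ae_all_iff.mpr
      (fun m : ℕ => perbeta (α + 1/(m+1)) (by
        have : (0:ℝ) < 1/(m+1) := by positivity
        linarith))
    filter_upwards [h] with ω hω
    by_contra hcon
    push_neg at hcon
    obtain ⟨m, hm⟩ := exists_nat_one_div_lt (sub_pos.mpr hcon)
    have h2 := hω m
    linarith
  have h0 := ae_iff.mp main
  have hseteq : {ω | α < limsup (fun n : ℕ =>
      ((∑ k ∈ Finset.Icc 1 n, Z k ω : ℕ) : ℝ) / (n : ℝ)) atTop}
      = {ω | ¬ limsup (fun n : ℕ =>
      ((∑ k ∈ Finset.Icc 1 n, Z k ω : ℕ) : ℝ) / (n : ℝ)) atTop ≤ α} := by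
    ext ω; simp [not_le]
  rw [hseteq]
  exact h0
end

section
/- Let U ⊂ ℝ^k be compact and let φ be a set-valued map assigning to each u ∈ U a closed subset φ(u) of a fixed compact set C ⊂ ℝ^d, which is upper hemi-continuous in the sense that whenever u_n → u in U, p_n ∈ φ(u_n), and p_n → p, then p ∈ φ(u). Suppose that for all u', u'' ∈ U, φ(u') ∩ φ(u'') ⊆ φ((1/2)u' + (1/2)u''). Then for every u ∈ U and ε > 0, there exists δ > 0 such that for all u', u'' ∈ U with u = (1/2)u' + (1/2)u'': B_δ(φ(u')) ∩ B_δ(φ(u'')) ⊆ B_ε(φ(u)), where B_δ(A) = {p ∈ ℝ^d : inf_{q∈A} |p−q| < δ} (and B_δ(∅) = ∅). -/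
open Finset Set Filter

/-- The L¹ distance on `ℝ^d`. -/
noncomputable def l1dist {m : ℕ} (x y : Fin m → ℝ) : ℝ := ∑ i, |x i - y i|

lemma l1dist_nonneg {m : ℕ} (x y : Fin m → ℝ) : 0 ≤ l1dist x y :=
  Finset.sum_nonneg fun _ _ => abs_nonneg _

lemma l1dist_le_mul {m : ℕ} (x y : Fin m → ℝ) : l1dist x y ≤ m * dist x y := by
  have : ∀ i ∈ Finset.univ, |x i - y i| ≤ dist x y := fun i _ => by
    simpa [Real.dist_eq] using dist_le_pi_dist x y i
  calc l1dist x y ≤ ∑ _i : Fin m, dist x y := Finset.sum_le_sum this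
    _ = m * dist x y := by simp [mul_comm]

lemma l1dist_comm {m : ℕ} (x y : Fin m → ℝ) : l1dist x y = l1dist y x := by
  unfold l1dist; congr 1; funext i; exact abs_sub_comm _ _

lemma dist_le_l1dist {m : ℕ} (x y : Fin m → ℝ) : dist x y ≤ l1dist x y := by
  rw [dist_pi_le_iff (l1dist_nonneg x y)]
  intro i
  rw [Real.dist_eq]
  exact Finset.single_le_sum (fun j _ => abs_nonneg (x j - y j)) (Finset.mem_univ i)

/-- Abstract lemma behind approximate population-consistency: for an upper
hemi-continuous, midpoint-consistent correspondence `φ` on a compact set `U` with closed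
values in a compact set `C`, for every `u ∈ U` and `ε > 0` there is `δ > 0` with
`B_δ(φ(u')) ∩ B_δ(φ(u'')) ⊆ B_ε(φ(u))` whenever `u = ½u' + ½u''`. -/
theorem stmt17 (k d : ℕ)
    (U : Set (Fin k → ℝ)) (hUcpt : IsCompact U)
    (C : Set (Fin d → ℝ)) (hCcpt : IsCompact C)
    (φ : (Fin k → ℝ) → Set (Fin d → ℝ))
    (hφsub : ∀ u ∈ U, φ u ⊆ C) (hφcl : ∀ u ∈ U, IsClosed (φ u))
    -- sequential upper hemi-continuity
    (hφuhc : ∀ (un : ℕ → Fin k → ℝ) (u : Fin k → ℝ), (∀ n, un n ∈ U) → u ∈ U →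
      Tendsto un atTop (nhds u) →
      ∀ (pn : ℕ → Fin d → ℝ) (p : Fin d → ℝ), (∀ n, pn n ∈ φ (un n)) →
        Tendsto pn atTop (nhds p) → p ∈ φ u)
    -- midpoint consistency
    (hcons : ∀ u' ∈ U, ∀ u'' ∈ U,
      φ u' ∩ φ u'' ⊆ φ ((2 : ℝ)⁻¹ • u' + (2 : ℝ)⁻¹ • u'')) :
    ∀ u ∈ U, ∀ ε > 0, ∃ δ > 0, ∀ u' ∈ U, ∀ u'' ∈ U,
      u = (2 : ℝ)⁻¹ • u' + (2 : ℝ)⁻¹ • u'' →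
      ∀ p : Fin d → ℝ,
        (∃ q ∈ φ u', l1dist p q < δ) → (∃ q ∈ φ u'', l1dist p q < δ) →
        ∃ q ∈ φ u, l1dist p q < ε := by
  intro u hu ε hε
  by_contra hcon
  push_neg at hcon
  have H : ∀ n : ℕ, ∃ (u' u'' : Fin k → ℝ) (p q1 q2 : Fin d → ℝ),
      u' ∈ U ∧ u'' ∈ U ∧
      u = (2 : ℝ)⁻¹ • u' + (2 : ℝ)⁻¹ • u'' ∧
      q1 ∈ φ u' ∧ l1dist p q1 < 1 / (n + 1) ∧
      q2 ∈ φ u'' ∧ l1dist p q2 < 1 / (n + 1) ∧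
      ∀ q ∈ φ u, ε ≤ l1dist p q := by
    intro n
    obtain ⟨u', hu', u'', hu'', heq, p, ⟨w1, hw1, hl1⟩, ⟨w2, hw2, hl2⟩, hfar⟩ :=
      hcon (1 / (n + 1)) (by positivity)
    exact ⟨u', u'', p, w1, w2, hu', hu'', heq, hw1, hl1, hw2, hl2, hfar⟩
  choose a b p q1 q2 ha hb heq hq1 hd1 hq2 hd2 hfar using H
  -- extract subsequences
  obtain ⟨a', ha', σ1, hσ1, hta⟩ := hUcpt.tendsto_subseq ha
  obtain ⟨b', hb', σ2, hσ2, htb⟩ := hUcpt.tendsto_subseq (fun n => hb (σ1 n))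
  have hq1C : ∀ n, q1 (σ1 (σ2 n)) ∈ C := fun n =>
    hφsub _ (ha _) (hq1 _)
  obtain ⟨q, hqC, σ3, hσ3, htq⟩ := hCcpt.tendsto_subseq hq1C
  set σ : ℕ → ℕ := fun n => σ1 (σ2 (σ3 n)) with hσdef
  have hσmono : StrictMono σ := hσ1.comp (hσ2.comp hσ3)
  have hσge : ∀ n, n ≤ σ n := fun n => hσmono.le_apply
  -- limits along σ
  have hta' : Tendsto (fun n => a (σ n)) atTop (nhds a') :=
    hta.comp ((hσ2.comp hσ3).tendsto_atTop)
  have htb' : Tendsto (fun n => b (σ n)) atTop (nhds b') :=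
    htb.comp (hσ3.tendsto_atTop)
  have htq' : Tendsto (fun n => q1 (σ n)) atTop (nhds q) := htq
  -- 1/(σ n + 1) → 0
  have hinv : Tendsto (fun n : ℕ => 1 / ((σ n : ℝ) + 1)) atTop (nhds 0) := by
    apply squeeze_zero (fun n => by positivity) (fun n => ?_)
      (tendsto_one_div_add_atTop_nhds_zero_nat)
    have : (n : ℝ) + 1 ≤ (σ n : ℝ) + 1 :=
      add_le_add_left (Nat.cast_le.mpr (hσge n)) 1
    apply one_div_le_one_div_of_le (by positivity) this
  -- p ∘ σ → q
  have htp : Tendsto (fun n => p (σ n)) atTop (nhds q) := by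
    rw [tendsto_iff_dist_tendsto_zero]
    apply squeeze_zero (fun n => dist_nonneg) (fun n => ?_)
      (by have h := hinv.add (tendsto_iff_dist_tendsto_zero.mp htq'); rwa [add_zero] at h)
    calc dist (p (σ n)) q ≤ dist (p (σ n)) (q1 (σ n)) + dist (q1 (σ n)) q :=
          dist_triangle _ _ _
      _ ≤ 1 / ((σ n : ℝ) + 1) + dist (q1 (σ n)) q := by
          have h1 := dist_le_l1dist (p (σ n)) (q1 (σ n))
          have h2 := hd1 (σ n)
          push_cast at h2 ⊢
          simp only [one_div] at h2 ⊢
          linarith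
  -- q2 ∘ σ → q
  have htq2 : Tendsto (fun n => q2 (σ n)) atTop (nhds q) := by
    rw [tendsto_iff_dist_tendsto_zero]
    apply squeeze_zero (fun n => dist_nonneg) (fun n => ?_)
      (by have h := hinv.add (tendsto_iff_dist_tendsto_zero.mp htp); rwa [add_zero] at h)
    calc dist (q2 (σ n)) q ≤ dist (q2 (σ n)) (p (σ n)) + dist (p (σ n)) q :=
          dist_triangle _ _ _
      _ ≤ 1 / ((σ n : ℝ) + 1) + dist (p (σ n)) q := by
          have h1 := dist_le_l1dist (q2 (σ n)) (p (σ n))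
          have h2 := hd2 (σ n)
          rw [l1dist_comm] at h1
          push_cast at h2 ⊢
          simp only [one_div] at h2 ⊢
          linarith
  -- membership via uhc
  have hq_a : q ∈ φ a' :=
    hφuhc (fun n => a (σ n)) a' (fun n => ha _) ha' hta'
      (fun n => q1 (σ n)) q (fun n => hq1 _) htq'
  have hq_b : q ∈ φ b' :=
    hφuhc (fun n => b (σ n)) b' (fun n => hb _) hb' htb'
      (fun n => q2 (σ n)) q (fun n => hq2 _) htq2
  have hmid : u = (2 : ℝ)⁻¹ • a' + (2 : ℝ)⁻¹ • b' := by
    have h1 : Tendsto (fun n => (2 : ℝ)⁻¹ • a (σ n) + (2 : ℝ)⁻¹ • b (σ n)) atTop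
        (nhds ((2 : ℝ)⁻¹ • a' + (2 : ℝ)⁻¹ • b')) :=
      (hta'.const_smul _).add (htb'.const_smul _)
    have h2 : (fun n => (2 : ℝ)⁻¹ • a (σ n) + (2 : ℝ)⁻¹ • b (σ n)) = fun _ => u := by
      funext n; exact (heq (σ n)).symm
    rw [h2] at h1
    exact tendsto_nhds_unique tendsto_const_nhds h1
  have hqu : q ∈ φ u := by
    rw [hmid]; exact hcons a' ha' b' hb' ⟨hq_a, hq_b⟩
  have hlim : Tendsto (fun n => (d : ℝ) * dist (p (σ n)) q) atTop (nhds 0) := by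
    simpa using (tendsto_iff_dist_tendsto_zero.mp htp).const_mul (d : ℝ)
  have hev : ∀ᶠ n in atTop, (d : ℝ) * dist (p (σ n)) q < ε := by
    have := hlim.eventually (eventually_lt_nhds hε)
    simpa using this
  obtain ⟨n, hn⟩ := hev.exists
  have h1 := hfar (σ n) q hqu
  have h2 := l1dist_le_mul (p (σ n)) q
  linarith
end

section
/- Suppose alternative i ∈ [d] is a Condorcet winner, i.e., M(i,j) > 1/2 for all j ≠ i; let α = min_{j≠i} M(i,j) − 1/2 and β = (1−α)/(1+2α) ∈ (0,1). Let δ, τ > 0 with δ < 1, let r > 0 satisfy r ≤ 1/d and r ≤ αδ/2, and let N ∈ ℕ satisfy r/(Nd) ≥ 2(1−r)/N² and N(δ − r/α) ≥ ⌈log(τ(1−β))/log(β)⌉. Then the unique stationary distribution π of the urn process with parameters N and r satisfies π({p ∈ Δ^{(N)} : p_i ≥ 1−δ}) ≥ 1 − τ; that is, in the stationary distribution, with probability at least 1−τ at least a (1−δ) fraction of the balls are labeled with the Condorcet winner. -/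
set_option maxHeartbeats 2000000


open Finset

/-- The states of an urn with `N` balls and `d` labels: `v i` is the number of balls
labeled `i`; the corresponding lottery is `p i = v i / N ∈ Δ^{(N)}`. -/
abbrev UrnState (d N : ℕ) := {v : Fin d → Fin (N + 1) // ∑ k, (v k : ℕ) = N}

/-- Transition probabilities of the urn process on `Δ^{(N)}` (states as ball counts):
`P(p, p + e_i/N − e_j/N) = 2(1−r) p_i p_j M(i,j) + (r/d) p_j` for `i ≠ j`, and
`P(p, p) = (1−r) Σ_k p_k² + r/d`, where `p = v/N`. -/
noncomputable def urnTransN (d N : ℕ) (M : Matrix (Fin d) (Fin d) ℝ) (r : ℝ)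
    (v w : UrnState d N) : ℝ :=
  (if w = v then (1 - r) * ∑ k, ((v.1 k : ℝ) / N) ^ 2 + r / (d : ℝ) else 0) +
  ∑ i, ∑ j,
    if i ≠ j ∧ (∀ k, ((w.1 k : ℕ) : ℤ) =
        ((v.1 k : ℕ) : ℤ) + (if k = i then 1 else 0) - (if k = j then 1 else 0)) then
      2 * (1 - r) * ((v.1 i : ℝ) / N) * ((v.1 j : ℝ) / N) * M i j
        + (r / (d : ℝ)) * ((v.1 j : ℝ) / N)
    else 0


section
variable {d N : ℕ} {M : Matrix (Fin d) (Fin d) ℝ} {r : ℝ}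

def Mv (v w : UrnState d N) (a b : Fin d) : Prop :=
  ∀ k, ((w.1 k : ℕ) : ℤ) =
    ((v.1 k : ℕ) : ℤ) + (if k = a then 1 else 0) - (if k = b then 1 else 0)

instance (v w : UrnState d N) (a b : Fin d) : Decidable (Mv v w a b) := by
  unfold Mv; infer_instance

lemma urnTransN_eq (v w : UrnState d N) : urnTransN d N M r v w =
    (if w = v then (1 - r) * ∑ k, ((v.1 k : ℝ) / N) ^ 2 + r / (d : ℝ) else 0) +
    ∑ a, ∑ b, if a ≠ b ∧ Mv v w a b then
      2 * (1 - r) * ((v.1 a : ℝ) / N) * ((v.1 b : ℝ) / N) * M a b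
        + (r / (d : ℝ)) * ((v.1 b : ℝ) / N) else 0 := rfl

lemma val_nonneg (hr0 : 0 ≤ r) (hr1 : r ≤ 1) (hM0 : ∀ a b, 0 ≤ M a b)
    (v : UrnState d N) (a b : Fin d) :
    0 ≤ 2 * (1 - r) * ((v.1 a : ℝ) / N) * ((v.1 b : ℝ) / N) * M a b
        + (r / (d : ℝ)) * ((v.1 b : ℝ) / N) := by
  have h1 : (0:ℝ) ≤ 1 - r := by linarith
  have := hM0 a b
  positivity

lemma self_nonneg (hr0 : 0 ≤ r) (hr1 : r ≤ 1) (v : UrnState d N) :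
    0 ≤ (1 - r) * ∑ k, ((v.1 k : ℝ) / N) ^ 2 + r / (d : ℝ) := by
  have h1 : (0:ℝ) ≤ 1 - r := by linarith
  positivity

lemma urnTransN_nonneg (hr0 : 0 ≤ r) (hr1 : r ≤ 1) (hM0 : ∀ a b, 0 ≤ M a b)
    (v w : UrnState d N) : 0 ≤ urnTransN d N M r v w := by
  rw [urnTransN_eq]
  apply add_nonneg
  · split_ifs
    · exact self_nonneg hr0 hr1 v
    · exact le_refl 0
  · apply Finset.sum_nonneg; intro a _
    apply Finset.sum_nonneg; intro b _
    split_ifs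
    · exact val_nonneg hr0 hr1 hM0 v a b
    · exact le_refl 0

lemma mv_unique {v w₁ w₂ : UrnState d N} {a b : Fin d}
    (h₁ : Mv v w₁ a b) (h₂ : Mv v w₂ a b) : w₁ = w₂ := by
  apply Subtype.ext; funext k
  have h := (h₁ k).trans (h₂ k).symm
  exact Fin.ext (by exact_mod_cast h)

lemma sum_ite_le' {α : Type*} (A : Finset α) (Q : α → Prop) [DecidablePred Q]
    (huniq : ∀ x y, Q x → Q y → x = y) {c : ℝ} (hc : 0 ≤ c) :
    ∑ x ∈ A, (if Q x then c else 0) ≤ c := by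
  classical
  rw [(Finset.sum_filter (s := A) (p := Q) (f := fun _ => c)).symm, Finset.sum_const,
    nsmul_eq_mul]
  have hcard : (A.filter Q).card ≤ 1 :=
    Finset.card_le_one.mpr fun x hx y hy =>
      huniq x y (Finset.mem_filter.mp hx).2 (Finset.mem_filter.mp hy).2
  calc ((A.filter Q).card : ℝ) * c ≤ 1 * c := by
        apply mul_le_mul_of_nonneg_right _ hc; exact_mod_cast hcard
    _ = c := one_mul c

lemma split_ne (f : Fin d → ℝ) (a : Fin d) :
    ∑ b, (if a ≠ b then f b else 0) = (∑ b, f b) - f a := by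
  have h : ∀ b, (if a ≠ b then f b else 0) = f b - (if b = a then f b else 0) := by
    intro b; by_cases h : b = a <;> simp [h, Ne.symm]
  rw [Finset.sum_congr rfl (fun b _ => h b), Finset.sum_sub_distrib,
    Finset.sum_ite_eq' univ a f, if_pos (mem_univ a)]

lemma psum (hN : 1 ≤ N) (v : UrnState d N) : ∑ k, ((v.1 k : ℝ) / N) = 1 := by
  have hNR : (N : ℝ) ≠ 0 := by positivity
  rw [← Finset.sum_div]
  have : ∑ k, ((v.1 k : ℕ) : ℝ) = (N : ℝ) := by exact_mod_cast congrArg (fun n : ℕ => (n : ℝ)) v.2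
  rw [this, div_self hNR]

lemma rowsum_le_one (hd : 1 ≤ d) (hN : 1 ≤ N) (hr0 : 0 ≤ r) (hr1 : r ≤ 1)
    (hM0 : ∀ a b, 0 ≤ M a b) (hMsum : ∀ a b, a ≠ b → M a b + M b a = 1)
    (v : UrnState d N) : ∑ w, urnTransN d N M r v w ≤ 1 := by
  classical
  set p : Fin d → ℝ := fun k => (v.1 k : ℝ) / N with hp
  have hpnn : ∀ k, 0 ≤ p k := fun k => by positivity
  have hpsum : ∑ k, p k = 1 := psum hN v
  simp only [urnTransN_eq]
  rw [Finset.sum_add_distrib]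
  have hself : ∑ w : UrnState d N,
      (if w = v then (1 - r) * ∑ k, p k ^ 2 + r / (d : ℝ) else 0)
      = (1 - r) * ∑ k, p k ^ 2 + r / (d : ℝ) := by
    rw [Finset.sum_ite_eq' univ v (fun _ => (1 - r) * ∑ k, p k ^ 2 + r / (d : ℝ))]
    exact if_pos (mem_univ v)
  rw [hself]
  have hswap : ∑ w : UrnState d N, ∑ a, ∑ b, (if a ≠ b ∧ Mv v w a b then
        2 * (1 - r) * p a * p b * M a b + (r / (d : ℝ)) * p b else 0)
      = ∑ a, ∑ b, ∑ w : UrnState d N, (if a ≠ b ∧ Mv v w a b then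
        2 * (1 - r) * p a * p b * M a b + (r / (d : ℝ)) * p b else 0) := by
    rw [Finset.sum_comm]
    exact Finset.sum_congr rfl fun a _ => Finset.sum_comm
  rw [hswap]
  have hbound : ∀ a b : Fin d, ∑ w : UrnState d N, (if a ≠ b ∧ Mv v w a b then
        2 * (1 - r) * p a * p b * M a b + (r / (d : ℝ)) * p b else 0)
      ≤ (if a ≠ b then 2 * (1 - r) * p a * p b * M a b + (r / (d : ℝ)) * p b else 0) := by
    intro a b
    by_cases hab : a ≠ b
    · rw [if_pos hab]
      exact sum_ite_le' univ _ (fun x y hx hy => mv_unique hx.2 hy.2)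
        (val_nonneg hr0 hr1 hM0 v a b)
    · rw [if_neg hab]
      apply le_of_eq
      apply Finset.sum_eq_zero
      intro w _
      rw [if_neg (fun h => hab h.1)]
  have h2 : ∑ a, ∑ b, ∑ w : UrnState d N, (if a ≠ b ∧ Mv v w a b then
        2 * (1 - r) * p a * p b * M a b + (r / (d : ℝ)) * p b else 0)
      ≤ ∑ a, ∑ b, (if a ≠ b then
        2 * (1 - r) * p a * p b * M a b + (r / (d : ℝ)) * p b else 0) :=
    Finset.sum_le_sum fun a _ => Finset.sum_le_sum fun b _ => hbound a b
  -- now compute the ideal total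
  have hsplit : ∀ a b : Fin d, (if a ≠ b then
        2 * (1 - r) * p a * p b * M a b + (r / (d : ℝ)) * p b else 0)
      = (if a ≠ b then 2 * (1 - r) * p a * p b * M a b else 0)
        + (if a ≠ b then (r / (d : ℝ)) * p b else 0) := by
    intro a b; by_cases hab : a ≠ b <;> simp [hab]
  have hS1S2 : (∑ a, ∑ b, (if a ≠ b then p a * p b * M a b else 0))
      = (∑ a, ∑ b, (if a ≠ b then p a * p b * M b a else 0)) := by
    rw [Finset.sum_comm]
    exact Finset.sum_congr rfl fun x _ => Finset.sum_congr rfl fun y _ =>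
      if_congr ne_comm (by ring) rfl
  have hoff : (∑ a, ∑ b, (if a ≠ b then p a * p b else 0)) = 1 - ∑ k, p k ^ 2 := by
    have : ∀ a : Fin d, ∑ b, (if a ≠ b then p a * p b else 0)
        = p a * (∑ b, p b) - p a * p a := by
      intro a; rw [split_ne (fun b => p a * p b) a, Finset.mul_sum]
    rw [Finset.sum_congr rfl fun a _ => this a, Finset.sum_sub_distrib]
    have e1 : ∑ a, p a * (∑ b, p b) = 1 := by
      rw [hpsum]; simpa using hpsum
    have e2 : ∑ a, p a * p a = ∑ k, p k ^ 2 := by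
      exact Finset.sum_congr rfl fun a _ => (sq (p a)).symm
    rw [e1, e2]
  have hsum2 : (∑ a, ∑ b, (if a ≠ b then 2 * (1 - r) * p a * p b * M a b else 0))
      = (1 - r) * (1 - ∑ k, p k ^ 2) := by
    have step1 : ∀ a b : Fin d, (if a ≠ b then 2 * (1 - r) * p a * p b * M a b else 0)
        = (1 - r) * ((if a ≠ b then p a * p b * M a b else 0)
            + (if a ≠ b then p a * p b * M b a else 0)
            + ((if a ≠ b then p a * p b * M a b else 0)
              - (if a ≠ b then p a * p b * M b a else 0))) := by
      intro a b; by_cases hab : a ≠ b <;> simp [hab] <;> ring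
    -- simpler: 2*S1 = S1 + S2 and S1 + S2 = offdiag
    have hMS : ∀ a b : Fin d, (if a ≠ b then p a * p b * M a b else 0)
        + (if a ≠ b then p a * p b * M b a else 0)
        = (if a ≠ b then p a * p b else 0) := by
      intro a b
      by_cases hab : a ≠ b
      · simp only [if_pos hab]
        have := hMsum a b hab
        calc p a * p b * M a b + p a * p b * M b a = p a * p b * (M a b + M b a) := by ring
          _ = p a * p b := by rw [this, mul_one]
      · simp [hab]
    have e3 : (∑ a, ∑ b, (if a ≠ b then 2 * (1 - r) * p a * p b * M a b else 0))
        = 2 * (1 - r) * (∑ a, ∑ b, (if a ≠ b then p a * p b * M a b else 0)) := by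
      rw [Finset.mul_sum]
      refine Finset.sum_congr rfl fun a _ => ?_
      rw [Finset.mul_sum]
      refine Finset.sum_congr rfl fun b _ => ?_
      by_cases hab : a ≠ b <;> simp [hab] <;> ring
    rw [e3]
    have e4 : (∑ a, ∑ b, (if a ≠ b then p a * p b * M a b else 0))
          + (∑ a, ∑ b, (if a ≠ b then p a * p b * M b a else 0))
        = 1 - ∑ k, p k ^ 2 := by
      rw [← hoff, ← Finset.sum_add_distrib]
      refine Finset.sum_congr rfl fun a _ => ?_
      rw [← Finset.sum_add_distrib]
      exact Finset.sum_congr rfl fun b _ => hMS a b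
    nlinarith [hS1S2, e4]
  have hsum3 : (∑ a, ∑ b, (if a ≠ b then (r / (d : ℝ)) * p b else 0))
      = (r / (d : ℝ)) * ((d : ℝ) - 1) := by
    have : ∀ a : Fin d, ∑ b, (if a ≠ b then (r / (d : ℝ)) * p b else 0)
        = (r / (d : ℝ)) * (1 - p a) := by
      intro a
      rw [split_ne (fun b => (r / (d : ℝ)) * p b) a]
      rw [← Finset.mul_sum, hpsum]; ring
    rw [Finset.sum_congr rfl fun a _ => this a]
    have : ∑ a : Fin d, (r / (d : ℝ)) * (1 - p a)
        = (r / (d : ℝ)) * ((d : ℝ) - 1) := by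
      rw [← Finset.mul_sum]
      congr 1
      rw [Finset.sum_sub_distrib, hpsum, Finset.sum_const, card_univ, Fintype.card_fin,
        nsmul_eq_mul, mul_one]
    rw [this]
  have htotal : (∑ a, ∑ b, (if a ≠ b then
        2 * (1 - r) * p a * p b * M a b + (r / (d : ℝ)) * p b else 0))
      = (1 - r) * (1 - ∑ k, p k ^ 2) + (r / (d : ℝ)) * ((d : ℝ) - 1) := by
    rw [Finset.sum_congr rfl fun a (_ : a ∈ univ) =>
      Finset.sum_congr rfl fun b (_ : b ∈ univ) => hsplit a b]
    rw [Finset.sum_congr rfl fun a (_ : a ∈ univ) => Finset.sum_add_distrib,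
      Finset.sum_add_distrib, hsum2, hsum3]
  have hdR : (1:ℝ) ≤ (d:ℝ) := by exact_mod_cast hd
  have hfin : (1 - r) * ∑ k, p k ^ 2 + r / (d : ℝ)
      + ((1 - r) * (1 - ∑ k, p k ^ 2) + (r / (d : ℝ)) * ((d : ℝ) - 1)) = 1 := by
    have hdne : (d:ℝ) ≠ 0 := by linarith
    field_simp
    ring
  linarith [h2, htotal.symm.le, htotal.le]

lemma count_le (v : UrnState d N) (k : Fin d) : (v.1 k : ℕ) ≤ N := by
  conv_rhs => rw [← v.2]
  exact Finset.single_le_sum (f := fun k => (v.1 k : ℕ)) (fun _ _ => Nat.zero_le _)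
    (mem_univ k)

lemma pair_le (v : UrnState d N) {a b : Fin d} (hab : a ≠ b) :
    (v.1 a : ℕ) + (v.1 b : ℕ) ≤ N := by
  calc (v.1 a : ℕ) + (v.1 b : ℕ) = ∑ x ∈ ({a, b} : Finset (Fin d)), (v.1 x : ℕ) :=
        (Finset.sum_pair (f := fun x => (v.1 x : ℕ)) hab).symm
    _ ≤ ∑ k, (v.1 k : ℕ) := Finset.sum_le_sum_of_subset (Finset.subset_univ _)
    _ = N := v.2

lemma mv_exists (v : UrnState d N) (a b : Fin d) (hab : a ≠ b)
    (hb : 1 ≤ (v.1 b : ℕ)) : ∃ w : UrnState d N, Mv v w a b := by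
  have hpair := pair_le v hab
  have ha1 : (v.1 a : ℕ) + 1 ≤ N := by omega
  set f : Fin d → Fin (N + 1) := fun k => if h : k = a then ⟨(v.1 a : ℕ) + 1, by omega⟩
    else if h' : k = b then ⟨(v.1 b : ℕ) - 1, by have := (v.1 b).2; omega⟩
    else v.1 k with hf
  have key : ∀ k, ((f k : ℕ) : ℤ) =
      ((v.1 k : ℕ) : ℤ) + (if k = a then 1 else 0) - (if k = b then 1 else 0) := by
    intro k
    by_cases h : k = a
    · subst h; simp [hf, hab]
    · by_cases h' : k = b
      · subst h'; simp [hf, h, Ne.symm hab]; omega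
      · simp [hf, h, h']
  have hsum : ∑ k, (f k : ℕ) = N := by
    have hz : (∑ k, ((f k : ℕ) : ℤ)) = (N : ℤ) := by
      rw [Finset.sum_congr rfl (fun k _ => key k)]
      rw [Finset.sum_sub_distrib, Finset.sum_add_distrib]
      have e1 : ∑ k : Fin d, ((if k = a then 1 else 0) : ℤ) = 1 := by
        simp [Finset.sum_ite_eq']
      have e2 : ∑ k : Fin d, ((if k = b then 1 else 0) : ℤ) = 1 := by
        simp [Finset.sum_ite_eq']
      have e3 : ∑ k : Fin d, ((v.1 k : ℕ) : ℤ) = (N : ℤ) := by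
        have := v.2; exact_mod_cast congrArg (fun n : ℕ => (n : ℤ)) this
      rw [e1, e2, e3]; ring
    have : ((∑ k, (f k : ℕ) : ℕ) : ℤ) = (N : ℤ) := by push_cast; exact hz
    exact_mod_cast this
  exact ⟨⟨f, hsum⟩, key⟩


lemma card_ne (b : Fin d) (c : ℝ) :
    ∑ a, (if a ≠ b then c else 0) = ((d : ℝ) - 1) * c := by
  have h : ∀ a, (if a ≠ b then c else 0) = c - (if a = b then c else 0) := by
    intro a; by_cases h : a = b <;> simp [h]
  rw [Finset.sum_congr rfl (fun a _ => h a), Finset.sum_sub_distrib,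
    Finset.sum_ite_eq' univ b (fun _ => c), if_pos (mem_univ b), Finset.sum_const,
    card_univ, Fintype.card_fin, nsmul_eq_mul]
  have hd : 1 ≤ d := Fin.pos b
  have : ((d : ℝ)) ≥ 1 := by exact_mod_cast hd
  ring


lemma split_ne' (f : Fin d → ℝ) (a : Fin d) :
    ∑ b, (if b ≠ a then f b else 0) = (∑ b, f b) - f a := by
  have h : ∀ b, (if b ≠ a then f b else 0) = f b - (if b = a then f b else 0) := by
    intro b; by_cases h : b = a <;> simp [h]
  rw [Finset.sum_congr rfl (fun b _ => h b), Finset.sum_sub_distrib,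
    Finset.sum_ite_eq' univ a f, if_pos (mem_univ a)]

lemma sum_ite_ge' {α : Type*} (A : Finset α) (Q : α → Prop) [DecidablePred Q]
    {x₀ : α} (hx₀ : x₀ ∈ A) (hQ : Q x₀) {c : ℝ} (hc : 0 ≤ c) :
    c ≤ ∑ x ∈ A, (if Q x then c else 0) := by
  have := Finset.single_le_sum (f := fun x => if Q x then c else 0)
    (fun x _ => by positivity) hx₀
  simpa [hQ] using this

lemma up_bound (i : Fin d) (α : ℝ) (hN : 1 ≤ N) (hr0 : 0 ≤ r) (hr1 : r ≤ 1)
    (hM0 : ∀ a b, 0 ≤ M a b) (hMub : ∀ a, a ≠ i → M a i ≤ 1/2 - α)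
    (v : UrnState d N) :
    ∑ w ∈ univ.filter (fun w : UrnState d N => (w.1 i : ℕ) < (v.1 i : ℕ)),
        urnTransN d N M r v w
      ≤ 2*(1-r)*(1/2-α)*((v.1 i : ℝ)/N)*(1 - (v.1 i : ℝ)/N)
        + (r/(d:ℝ))*((d:ℝ)-1)*((v.1 i : ℝ)/N) := by
  classical
  set p : Fin d → ℝ := fun k => (v.1 k : ℝ) / N with hp
  have hpnn : ∀ k, 0 ≤ p k := fun k => by positivity
  have hpsum : ∑ k, p k = 1 := psum hN v
  set A := univ.filter (fun w : UrnState d N => (w.1 i : ℕ) < (v.1 i : ℕ)) with hA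
  simp only [urnTransN_eq]
  rw [Finset.sum_add_distrib]
  have hself : ∑ w ∈ A, (if w = v then (1 - r) * ∑ k, p k ^ 2 + r / (d : ℝ) else 0) = 0 := by
    rw [Finset.sum_ite_eq' A v (fun _ => (1 - r) * ∑ k, p k ^ 2 + r / (d : ℝ))]
    rw [if_neg]
    intro hv
    exact absurd (mem_filter.mp hv).2 (lt_irrefl _)
  rw [hself, zero_add]
  have hswap : ∑ w ∈ A, ∑ a, ∑ b, (if a ≠ b ∧ Mv v w a b then
        2 * (1 - r) * p a * p b * M a b + (r / (d : ℝ)) * p b else 0)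
      = ∑ a, ∑ b, ∑ w ∈ A, (if a ≠ b ∧ Mv v w a b then
        2 * (1 - r) * p a * p b * M a b + (r / (d : ℝ)) * p b else 0) := by
    rw [Finset.sum_comm]
    exact Finset.sum_congr rfl fun a _ => Finset.sum_comm
  rw [hswap]
  have hbound : ∀ a b : Fin d, ∑ w ∈ A, (if a ≠ b ∧ Mv v w a b then
        2 * (1 - r) * p a * p b * M a b + (r / (d : ℝ)) * p b else 0)
      ≤ (if b = i ∧ ¬ a = i then
          2 * (1 - r) * p a * p i * (1/2 - α) + (r / (d : ℝ)) * p i else 0) := by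
    intro a b
    by_cases hcase : b = i ∧ ¬ a = i
    · obtain ⟨hbi, hai⟩ := hcase
      subst hbi
      rw [if_pos ⟨rfl, hai⟩]
      have h1 : ∑ w ∈ A, (if a ≠ b ∧ Mv v w a b then
            2 * (1 - r) * p a * p b * M a b + (r / (d : ℝ)) * p b else 0)
          ≤ 2 * (1 - r) * p a * p b * M a b + (r / (d : ℝ)) * p b :=
        sum_ite_le' A _ (fun x y hx hy => mv_unique hx.2 hy.2)
          (val_nonneg hr0 hr1 hM0 v a b)
      refine h1.trans ?_
      have hMa := hMub a hai
      have hfac : (0:ℝ) ≤ 2 * (1 - r) * p a * p b := by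
        have : (0:ℝ) ≤ 1 - r := by linarith
        positivity
      nlinarith [mul_le_mul_of_nonneg_left hMa hfac]
    · rw [if_neg hcase]
      apply le_of_eq
      apply Finset.sum_eq_zero
      intro w hw
      rw [if_neg]
      rintro ⟨hab, hmv⟩
      have hwlt : (w.1 i : ℕ) < (v.1 i : ℕ) := (mem_filter.mp hw).2
      have hi := hmv i
      have hbi : b = i := by
        by_contra hbi
        rw [if_neg (fun h : i = b => hbi h.symm)] at hi
        split_ifs at hi <;> omega
      have hai : ¬ a = i := by
        intro h; exact hab (h.trans hbi.symm)
      exact hcase ⟨hbi, hai⟩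
  have h2 := Finset.sum_le_sum (fun a (_ : a ∈ univ) =>
    Finset.sum_le_sum (fun b (_ : b ∈ univ) => hbound a b))
  refine h2.trans ?_
  have hcollapse : ∀ a : Fin d, ∑ b, (if b = i ∧ ¬ a = i then
        2 * (1 - r) * p a * p i * (1/2 - α) + (r / (d : ℝ)) * p i else 0)
      = (if a ≠ i then
        2 * (1 - r) * p a * p i * (1/2 - α) + (r / (d : ℝ)) * p i else 0) := by
    intro a
    by_cases hai : a = i
    · simp [hai]
    · simp only [hai, not_false_iff, and_true]
      rw [Finset.sum_ite_eq' univ i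
        (fun _ => 2 * (1 - r) * p a * p i * (1/2 - α) + (r / (d : ℝ)) * p i)]
      simp [Ne, hai]
  rw [Finset.sum_congr rfl fun a _ => hcollapse a]
  have hsplit : ∀ a : Fin d, (if a ≠ i then
        2 * (1 - r) * p a * p i * (1/2 - α) + (r / (d : ℝ)) * p i else 0)
      = (if a ≠ i then (2 * (1 - r) * p i * (1/2 - α)) * p a else 0)
        + (if a ≠ i then (r / (d : ℝ)) * p i else 0) := by
    intro a; by_cases hai : a ≠ i <;> simp [hai] <;> ring
  rw [Finset.sum_congr rfl fun a _ => hsplit a, Finset.sum_add_distrib]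
  rw [split_ne' (fun a => (2 * (1 - r) * p i * (1/2 - α)) * p a) i]
  rw [card_ne i ((r / (d : ℝ)) * p i)]
  rw [← Finset.mul_sum, hpsum]
  apply le_of_eq
  ring

lemma down_bound (i : Fin d) (α : ℝ) (hN : 1 ≤ N) (hr0 : 0 ≤ r) (hr1 : r ≤ 1)
    (hM0 : ∀ a b, 0 ≤ M a b) (hα0 : 0 ≤ α)
    (hMlb : ∀ b, b ≠ i → 1/2 + α ≤ M i b) (v : UrnState d N) :
    2*(1-r)*(1/2+α)*((v.1 i : ℝ)/N)*(1 - (v.1 i : ℝ)/N)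
        + (r/(d:ℝ))*(1 - (v.1 i : ℝ)/N)
      ≤ ∑ w ∈ univ.filter (fun w : UrnState d N => (v.1 i : ℕ) < (w.1 i : ℕ)),
        urnTransN d N M r v w := by
  classical
  set p : Fin d → ℝ := fun k => (v.1 k : ℝ) / N with hp
  have hpnn : ∀ k, 0 ≤ p k := fun k => by positivity
  have hpsum : ∑ k, p k = 1 := psum hN v
  have h1r : (0:ℝ) ≤ 1 - r := by linarith
  set B := univ.filter (fun w : UrnState d N => (v.1 i : ℕ) < (w.1 i : ℕ)) with hB
  have hg : ∀ w ∈ B, (∑ b, (if i ≠ b ∧ Mv v w i b then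
        2 * (1 - r) * p i * p b * M i b + (r / (d : ℝ)) * p b else 0))
      ≤ urnTransN d N M r v w := by
    intro w _
    rw [urnTransN_eq]
    have hsl : (∑ b, (if i ≠ b ∧ Mv v w i b then
          2 * (1 - r) * p i * p b * M i b + (r / (d : ℝ)) * p b else 0))
        ≤ ∑ a, ∑ b, (if a ≠ b ∧ Mv v w a b then
          2 * (1 - r) * p a * p b * M a b + (r / (d : ℝ)) * p b else 0) := by
      apply Finset.single_le_sum (f := fun a => ∑ b, (if a ≠ b ∧ Mv v w a b then
          2 * (1 - r) * p a * p b * M a b + (r / (d : ℝ)) * p b else 0))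
        (fun a _ => Finset.sum_nonneg fun b _ => ?_) (mem_univ i)
      split_ifs
      · exact val_nonneg hr0 hr1 hM0 v a b
      · exact le_refl 0
    have hs0 : (0:ℝ) ≤ (if w = v then (1 - r) * ∑ k, p k ^ 2 + r / (d : ℝ) else 0) := by
      split_ifs
      · exact self_nonneg hr0 hr1 v
      · exact le_refl 0
    linarith
  have hstep : ∑ w ∈ B, (∑ b, (if i ≠ b ∧ Mv v w i b then
        2 * (1 - r) * p i * p b * M i b + (r / (d : ℝ)) * p b else 0))
      ≤ ∑ w ∈ B, urnTransN d N M r v w := Finset.sum_le_sum hg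
  refine le_trans ?_ hstep
  rw [Finset.sum_comm]
  have hbnd : ∀ b : Fin d, (if b ≠ i then
        (2 * (1 - r) * p i * (1/2 + α) + r / (d : ℝ)) * p b else 0)
      ≤ ∑ w ∈ B, (if i ≠ b ∧ Mv v w i b then
        2 * (1 - r) * p i * p b * M i b + (r / (d : ℝ)) * p b else 0) := by
    intro b
    by_cases hbi : b ≠ i
    · rw [if_pos hbi]
      by_cases hvb : 1 ≤ (v.1 b : ℕ)
      · obtain ⟨w₀, hw₀⟩ := mv_exists v i b (Ne.symm hbi) hvb
        have hw₀B : w₀ ∈ B := by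
          rw [hB, mem_filter]
          refine ⟨mem_univ _, ?_⟩
          have := hw₀ i
          rw [if_pos rfl, if_neg (fun h : i = b => hbi h.symm)] at this
          omega
        have hge := sum_ite_ge' B (fun w => i ≠ b ∧ Mv v w i b) hw₀B
          ⟨Ne.symm hbi, hw₀⟩ (val_nonneg hr0 hr1 hM0 v i b)
        refine le_trans ?_ hge
        have hMb := hMlb b hbi
        have hfac : (0:ℝ) ≤ 2 * (1 - r) * p i * p b := by positivity
        nlinarith [mul_le_mul_of_nonneg_left hMb hfac]
      · have hpb : p b = 0 := by
          have h0 : (v.1 b : ℕ) = 0 := by omega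
          simp [hp, h0]
        have hL : (2 * (1 - r) * p i * (1/2 + α) + r / (d : ℝ)) * p b = 0 := by
          rw [hpb, mul_zero]
        rw [hL]
        apply Finset.sum_nonneg
        intro w _
        split_ifs with h
        · exact val_nonneg hr0 hr1 hM0 v i b
        · exact le_refl 0
    · rw [if_neg hbi]
      apply Finset.sum_nonneg
      intro w _
      split_ifs with h
      · exact val_nonneg hr0 hr1 hM0 v i b
      · exact le_refl 0
  refine le_trans ?_ (Finset.sum_le_sum fun b (_ : b ∈ univ) => hbnd b)
  rw [split_ne' (fun b => (2 * (1 - r) * p i * (1/2 + α) + r / (d : ℝ)) * p b) i]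
  rw [← Finset.mul_sum, hpsum]
  apply le_of_eq
  ring

lemma numcore (α β r dd n m : ℝ) (hdd : 1 ≤ dd) (hα0 : 0 < α) (hα2 : α ≤ 1/2)
    (hβ : β = (1-α)/(1+2*α)) (hr0 : 0 < r) (hr1 : r ≤ 1) (hrd : r ≤ 1/dd)
    (hm1 : 1 ≤ m) (hmn : m ≤ n)
    (hN1 : 2*(1-r)/n^2 ≤ r/(n*dd)) (hcond : n*r ≤ α*(n-m)) :
    2*(1-r)*(1/2-α)*(m/n)*(1-m/n) + (r/dd)*(dd-1)*(m/n)
    ≤ β * (2*(1-r)*(1/2+α)*((m-1)/n)*(1-(m-1)/n) + (r/dd)*(1-(m-1)/n)) := by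
  have hn1 : (1:ℝ) ≤ n := hm1.trans hmn
  have hn0 : (0:ℝ) < n := by linarith
  have hdd0 : (0:ℝ) < dd := by linarith
  have h12a : (0:ℝ) < 1 + 2*α := by linarith
  have hβval : β*(1/2+α) = (1-α)/2 := by rw [hβ]; field_simp
  have hβ0 : 0 < β := by rw [hβ]; apply div_pos <;> linarith
  have hrdd : r*dd ≤ 1 := by
    rw [le_div_iff₀ hdd0] at hrd; linarith
  have hN1' : 2*(1-r)*dd ≤ r*n := by
    rw [div_le_div_iff₀ (by positivity) (by positivity)] at hN1
    have h := hN1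
    nlinarith [hn0]
  have h2β : 1 - α ≤ 2*β := by
    have hβeq : 2*β*(1+2*α) = 2*(1-α) := by rw [hβ]; field_simp
    nlinarith [hβeq]
  have hm0 : (0:ℝ) ≤ m := by linarith
  have h1r : (0:ℝ) ≤ 1 - r := by linarith
  have hA1 : r*(dd-1)*m*n ≤ (1-r)*α*m*(n-m)*dd := by
    have h1 : (1-r)*m*dd*(n*r) ≤ (1-r)*m*dd*(α*(n-m)) :=
      mul_le_mul_of_nonneg_left hcond (by positivity)
    nlinarith [mul_nonneg (mul_nonneg (mul_nonneg hr0.le hm0) hn0.le)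
      (sub_nonneg.mpr hrdd)]
  have hA2 : 0 ≤ (1-r)*(1-α)*(m-1-(n-m))*dd + r*β*((n-m)+1)*n := by
    have hY0 : (0:ℝ) ≤ n - m + 1 := by linarith
    have h1α : (0:ℝ) ≤ 1 - α := by linarith
    have hc0 : (0:ℝ) ≤ (1-r)*(1-α) := mul_nonneg h1r h1α
    have s1 : (1-r)*(1-α)*(n-m+1)*dd ≤ 2*β*((1-r)*(n-m+1)*dd) := by
      nlinarith [mul_nonneg (mul_nonneg h1r hY0) hdd0.le]
    have s2 : 2*β*((1-r)*(n-m+1)*dd) ≤ β*(n-m+1)*(r*n) := by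
      nlinarith [mul_nonneg hβ0.le hY0]
    have s3 : 0 ≤ (1-r)*(1-α)*m*dd := mul_nonneg (mul_nonneg hc0 hm0) hdd0.le
    nlinarith [s1, s2, s3]
  have key : 2*(1-r)*(1/2-α)*m*(n-m)*dd + r*(dd-1)*m*n
      ≤ β*(2*(1-r)*(1/2+α)*(m-1)*((n-m)+1)*dd + r*((n-m)+1)*n) := by
    have hrw : β*(2*(1-r)*(1/2+α)*(m-1)*((n-m)+1)*dd + r*((n-m)+1)*n)
        = (1-r)*(1-α)*(m-1)*((n-m)+1)*dd + β*r*((n-m)+1)*n := by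
      linear_combination (2*(1-r)*(m-1)*((n-m)+1)*dd) * hβval
    rw [hrw]
    nlinarith [hA1, hA2]
  have hc : (0:ℝ) < n^2*dd := by positivity
  have h2 : 2*(1-r)*(1/2-α)*(m/n)*(1-m/n) + (r/dd)*(dd-1)*(m/n)
      = (2*(1-r)*(1/2-α)*m*(n-m)*dd + r*(dd-1)*m*n)/(n^2*dd) := by
    field_simp
  have h3 : β * (2*(1-r)*(1/2+α)*((m-1)/n)*(1-(m-1)/n) + (r/dd)*(1-(m-1)/n))
      = (β*(2*(1-r)*(1/2+α)*(m-1)*((n-m)+1)*dd + r*((n-m)+1)*n))/(n^2*dd) := by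
    field_simp; ring
  rw [h2, h3]
  exact (div_le_div_iff_of_pos_right hc).mpr key


lemma step_main (i : Fin d) (α β : ℝ) (hd : 1 ≤ d) (hN : 1 ≤ N)
    (hα0 : 0 < α) (hα2 : α ≤ 1/2) (hβeq : β = (1-α)/(1+2*α))
    (hr0 : 0 < r) (hr1 : r ≤ 1) (hrd : r ≤ 1/(d:ℝ))
    (hN1 : 2*(1-r)/(N:ℝ)^2 ≤ r/((N:ℝ)*d))
    (hM0 : ∀ a b, 0 ≤ M a b) (hMsum : ∀ a b, a ≠ b → M a b + M b a = 1)
    (hMlb : ∀ b, b ≠ i → 1/2 + α ≤ M i b) (hMub : ∀ a, a ≠ i → M a i ≤ 1/2 - α)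
    (π : UrnState d N → ℝ) (hπ0 : ∀ v, 0 ≤ π v)
    (hπstat : ∀ w, ∑ v, π v * urnTransN d N M r v w = π w)
    (m : ℕ) (hm1 : 1 ≤ m) (hcond : (N:ℝ)*r ≤ α*((N:ℝ)-m)) :
    ∑ v ∈ univ.filter (fun v : UrnState d N => (v.1 i : ℕ) = m - 1), π v
      ≤ β * ∑ v ∈ univ.filter (fun v : UrnState d N => (v.1 i : ℕ) = m), π v := by
  classical
  have hNR : (0:ℝ) < N := by exact_mod_cast hN
  have hdR : (1:ℝ) ≤ d := by exact_mod_cast hd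
  have hmNR : (m:ℝ) < N := by
    by_contra hmn
    push_neg at hmn
    have h1 : α*((N:ℝ)-m) ≤ 0 := mul_nonpos_of_nonneg_of_nonpos hα0.le (by linarith)
    nlinarith
  have hmN : m < N := by exact_mod_cast hmNR
  set P := urnTransN d N M r with hP
  set A := univ.filter (fun w : UrnState d N => (w.1 i : ℕ) < m) with hA
  set s : UrnState d N → ℝ := fun v => ∑ w ∈ A, P v w with hs
  set t : UrnState d N → ℝ := fun v => ∑ w ∈ univ.filter
    (fun w : UrnState d N => ¬ (w.1 i : ℕ) < m), P v w with ht
  have hstat_sum : ∑ w ∈ A, π w = ∑ v, π v * s v := by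
    calc ∑ w ∈ A, π w = ∑ w ∈ A, ∑ v, π v * P v w :=
          Finset.sum_congr rfl fun w _ => (hπstat w).symm
      _ = ∑ v, ∑ w ∈ A, π v * P v w := Finset.sum_comm
      _ = ∑ v, π v * s v := Finset.sum_congr rfl fun v _ => (Finset.mul_sum _ _ _).symm
  have hsv0 : ∀ v : UrnState d N, m + 1 ≤ (v.1 i : ℕ) → s v = 0 := by
    intro v hv
    apply Finset.sum_eq_zero
    intro w hw
    have hcw : (w.1 i : ℕ) < m := (mem_filter.mp hw).2
    rw [hP, urnTransN_eq]
    have hwv : ¬ w = v := by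
      intro h; rw [h] at hcw; omega
    rw [if_neg hwv, zero_add]
    apply Finset.sum_eq_zero; intro a _
    apply Finset.sum_eq_zero; intro b _
    rw [if_neg]
    rintro ⟨hab, hmv⟩
    have hi := hmv i
    split_ifs at hi <;> omega
  have hst : ∀ v, s v + t v ≤ 1 := by
    intro v
    have := Finset.sum_filter_add_sum_filter_not univ
      (fun w : UrnState d N => (w.1 i : ℕ) < m) (P v)
    have hrow : ∑ w, P v w ≤ 1 := rowsum_le_one hd hN hr0.le hr1 hM0 hMsum v
    rw [hs, ht]
    simp only [hA]
    linarith [this, hrow]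
  have ht0 : ∀ v, 0 ≤ t v := by
    intro v
    apply Finset.sum_nonneg
    intro w _
    exact urnTransN_nonneg hr0.le hr1 hM0 v w
  have hs0 : ∀ v, 0 ≤ s v := by
    intro v
    apply Finset.sum_nonneg
    intro w _
    exact urnTransN_nonneg hr0.le hr1 hM0 v w
  set U : ℝ := 2*(1-r)*(1/2-α)*((m:ℝ)/N)*(1-(m:ℝ)/N) + (r/(d:ℝ))*((d:ℝ)-1)*((m:ℝ)/N)
    with hU
  set L : ℝ := 2*(1-r)*(1/2+α)*(((m:ℝ)-1)/N)*(1-((m:ℝ)-1)/N)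
    + (r/(d:ℝ))*(1-((m:ℝ)-1)/N) with hL
  have hs_up : ∀ v : UrnState d N, (v.1 i : ℕ) = m → s v ≤ U := by
    intro v hcv
    have h := up_bound (M := M) (r := r) i α hN hr0.le hr1 hM0 hMub v
    rw [hs]
    simp only [hA]
    simp only [hcv] at h
    exact h
  have ht_dn : ∀ v : UrnState d N, (v.1 i : ℕ) = m - 1 → L ≤ t v := by
    intro v hcv
    have h := down_bound (M := M) (r := r) i α hN hr0.le hr1 hM0 hα0.le hMlb v
    have hfe : univ.filter (fun w : UrnState d N => (v.1 i : ℕ) < (w.1 i : ℕ))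
        = univ.filter (fun w : UrnState d N => ¬ (w.1 i : ℕ) < m) := by
      apply Finset.filter_congr
      intro w _
      rw [hcv]
      constructor <;> (intro; omega)
    rw [hfe] at h
    have hcast : ((v.1 i : ℕ) : ℝ) = (m:ℝ) - 1 := by
      rw [hcv]
      rw [Nat.cast_sub hm1]
      simp
    rw [hcast] at h
    rw [ht]
    exact h
  -- main inequalities
  set gm := ∑ v ∈ univ.filter (fun v : UrnState d N => (v.1 i : ℕ) = m), π v with hgm
  set gm1 := ∑ v ∈ univ.filter (fun v : UrnState d N => (v.1 i : ℕ) = m - 1), π v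
    with hgm1
  have hgm0 : 0 ≤ gm := Finset.sum_nonneg fun v _ => hπ0 v
  have hgm10 : 0 ≤ gm1 := Finset.sum_nonneg fun v _ => hπ0 v
  have hTs : ∑ v, π v * s v
      = (∑ v ∈ univ.filter (fun v : UrnState d N => (v.1 i : ℕ) = m), π v * s v)
        + ∑ v ∈ A, π v * s v := by
    have h1 : ∑ v, π v * s v
        = ∑ v ∈ univ.filter (fun v : UrnState d N => (v.1 i : ℕ) ≤ m), π v * s v := by
      symm
      apply Finset.sum_subset (Finset.filter_subset _ _)
      intro v _ hv
      have : m + 1 ≤ (v.1 i : ℕ) := by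
        simp only [mem_filter, mem_univ, true_and] at hv
        omega
      rw [hsv0 v this, mul_zero]
    rw [h1]
    rw [← Finset.sum_filter_add_sum_filter_not
      (univ.filter (fun v : UrnState d N => (v.1 i : ℕ) ≤ m))
      (fun v : UrnState d N => (v.1 i : ℕ) = m)]
    congr 1
    · rw [Finset.filter_filter]
      apply Finset.sum_congr _ (fun _ _ => rfl)
      apply Finset.filter_congr
      intro v _
      constructor
      · rintro ⟨_, h⟩; exact h
      · intro h; exact ⟨le_of_eq h, h⟩
    · rw [Finset.filter_filter, hA]
      apply Finset.sum_congr _ (fun _ _ => rfl)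
      apply Finset.filter_congr
      intro v _
      constructor
      · rintro ⟨h1, h2⟩; omega
      · intro h; omega
  have hb1 : (∑ v ∈ univ.filter (fun v : UrnState d N => (v.1 i : ℕ) = m), π v * s v)
      ≤ U * gm := by
    rw [hgm, Finset.mul_sum]
    apply Finset.sum_le_sum
    intro v hv
    have hcv : (v.1 i : ℕ) = m := by
      simp only [mem_filter, mem_univ, true_and] at hv; exact hv
    calc π v * s v ≤ π v * U := mul_le_mul_of_nonneg_left (hs_up v hcv) (hπ0 v)
      _ = U * π v := mul_comm _ _
  have hb2 : ∑ v ∈ A, π v * s v ≤ (∑ v ∈ A, π v) - ∑ v ∈ A, π v * t v := by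
    rw [← Finset.sum_sub_distrib]
    apply Finset.sum_le_sum
    intro v _
    have := hst v
    nlinarith [hπ0 v, ht0 v]
  have hkey : ∑ v ∈ A, π v * t v ≤ U * gm := by
    have := hstat_sum
    linarith [hTs, hb1, hb2, hstat_sum]
  have hlow : L * gm1 ≤ ∑ v ∈ A, π v * t v := by
    have hsub : univ.filter (fun v : UrnState d N => (v.1 i : ℕ) = m - 1) ⊆ A := by
      intro v hv
      simp only [mem_filter, mem_univ, true_and] at hv ⊢
      rw [hA, mem_filter]
      refine ⟨mem_univ _, ?_⟩
      omega
    calc L * gm1 = ∑ v ∈ univ.filter (fun v : UrnState d N => (v.1 i : ℕ) = m - 1),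
          L * π v := by rw [hgm1, Finset.mul_sum]
      _ ≤ ∑ v ∈ univ.filter (fun v : UrnState d N => (v.1 i : ℕ) = m - 1),
          π v * t v := by
          apply Finset.sum_le_sum
          intro v hv
          have hcv : (v.1 i : ℕ) = m - 1 := by
            simp only [mem_filter, mem_univ, true_and] at hv; exact hv
          calc L * π v = π v * L := mul_comm _ _
            _ ≤ π v * t v := mul_le_mul_of_nonneg_left (ht_dn v hcv) (hπ0 v)
      _ ≤ ∑ v ∈ A, π v * t v := by
          apply Finset.sum_le_sum_of_subset_of_nonneg hsub
          intro v _ _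
          exact mul_nonneg (hπ0 v) (ht0 v)
  have hUL : U ≤ β * L := by
    rw [hU, hL]
    exact numcore α β r (d:ℝ) (N:ℝ) (m:ℝ) hdR hα0 hα2 hβeq hr0 hr1 hrd
      (by exact_mod_cast hm1) hmNR.le hN1 hcond
  have hL0 : 0 < L := by
    rw [hL]
    have h1 : (0:ℝ) < r/(d:ℝ) := div_pos hr0 (by linarith)
    have h2 : ((m:ℝ)-1)/N < 1 := by
      rw [div_lt_one hNR]; linarith
    have h3 : (0:ℝ) ≤ ((m:ℝ)-1)/N := by
      apply div_nonneg _ hNR.le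
      have : (1:ℝ) ≤ m := by exact_mod_cast hm1
      linarith
    have h4 : (0:ℝ) ≤ 2*(1-r)*(1/2+α)*(((m:ℝ)-1)/N)*(1-((m:ℝ)-1)/N) := by
      have : (0:ℝ) ≤ 1 - r := by linarith
      have h5 : (0:ℝ) ≤ 1-((m:ℝ)-1)/N := by linarith
      positivity
    nlinarith
  have hfinal : L * gm1 ≤ L * (β * gm) := by
    have h1 : U * gm ≤ (β * L) * gm := mul_le_mul_of_nonneg_right hUL hgm0
    calc L * gm1 ≤ U * gm := le_trans hlow hkey
      _ ≤ (β * L) * gm := h1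
      _ = L * (β * gm) := by ring
  exact le_of_mul_le_mul_left hfinal hL0

end

/-- If alternative `i` is a Condorcet winner, `α = min_{j≠i} M(i,j) − 1/2`,
`β = (1−α)/(1+2α)`, the mutation rate satisfies `r ≤ 1/d` and `r ≤ αδ/2`, and `N` is
large enough (`r/(Nd) ≥ 2(1−r)/N²` and `N(δ − r/α) ≥ ⌈log(τ(1−β))/log β⌉`), then the
stationary distribution of the urn process puts probability at least `1 − τ` on states
where at least a `1−δ` fraction of the balls are labeled with the Condorcet winner. -/
theorem stmt19 (d : ℕ) (hd : 1 ≤ d) (M : Matrix (Fin d) (Fin d) ℝ)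
    (hM0 : ∀ i j, 0 ≤ M i j) (hM1 : ∀ i j, M i j ≤ 1)
    (hMsum : ∀ i j, i ≠ j → M i j + M j i = 1)
    (i : Fin d) (hCW : ∀ j, j ≠ i → 1 / 2 < M i j)
    (α β : ℝ) (hα : IsLeast {x : ℝ | ∃ j, j ≠ i ∧ x = M i j - 1 / 2} α)
    (hβ : β = (1 - α) / (1 + 2 * α))
    (δ τ r : ℝ) (hδ0 : 0 < δ) (hδ1 : δ < 1) (hτ : 0 < τ)
    (hr0 : 0 < r) (hr1 : r ≤ 1) (hrd : r ≤ 1 / (d : ℝ)) (hrαδ : r ≤ α * δ / 2)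
    (N : ℕ) (hN : 1 ≤ N)
    (hN1 : 2 * (1 - r) / (N : ℝ) ^ 2 ≤ r / ((N : ℝ) * d))
    (hN2 : ((⌈Real.log (τ * (1 - β)) / Real.log β⌉ : ℤ) : ℝ) ≤ (N : ℝ) * (δ - r / α))
    -- `π` is the stationary distribution of the urn process
    (π : UrnState d N → ℝ) (hπ0 : ∀ v, 0 ≤ π v) (hπ1 : ∑ v, π v = 1)
    (hπstat : ∀ w, ∑ v, π v * urnTransN d N M r v w = π w) :
    1 - τ ≤ ∑ v ∈ Finset.univ.filter
      (fun v : UrnState d N => 1 - δ ≤ (v.1 i : ℝ) / N), π v := by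
  classical
  obtain ⟨hmem, hlb⟩ := hα
  obtain ⟨j₀, hj₀, hαeq⟩ := hmem
  have hα0 : 0 < α := by have := hCW j₀ hj₀; linarith
  have hα2 : α ≤ 1/2 := by have := hM1 i j₀; linarith
  have hMlb : ∀ b, b ≠ i → 1/2 + α ≤ M i b := by
    intro b hb
    have := hlb ⟨b, hb, rfl⟩
    linarith
  have hMub : ∀ a, a ≠ i → M a i ≤ 1/2 - α := by
    intro a ha
    have h1 := hMsum i a (Ne.symm ha)
    have h2 := hMlb a ha
    linarith
  have hβ0 : 0 < β := by rw [hβ]; apply div_pos <;> linarith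
  have hβ1 : β < 1 := by
    rw [hβ, div_lt_one (by linarith)]
    linarith
  have hNR : (0:ℝ) < N := by exact_mod_cast hN
  have hdR : (1:ℝ) ≤ d := by exact_mod_cast hd
  by_cases hτ1 : 1 ≤ τ
  · have : (0:ℝ) ≤ ∑ v ∈ Finset.univ.filter
        (fun v : UrnState d N => 1 - δ ≤ (v.1 i : ℝ) / N), π v :=
      Finset.sum_nonneg fun v _ => hπ0 v
    linarith
  push_neg at hτ1
  -- key numeric quantities
  set l0 : ℕ := (⌈(N:ℝ)*r/α⌉).toNat with hl0def
  set K : ℕ := (⌈Real.log (τ * (1 - β)) / Real.log β⌉).toNat with hKdef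
  have hx0 : (0:ℝ) ≤ (N:ℝ)*r/α := by positivity
  have hl0lb : (N:ℝ)*r/α ≤ l0 := by
    have h1 := Int.le_ceil ((N:ℝ)*r/α)
    have h2 : (⌈(N:ℝ)*r/α⌉ : ℝ) ≤ ((⌈(N:ℝ)*r/α⌉).toNat : ℝ) := by
      exact_mod_cast Int.self_le_toNat _
    linarith
  have hl0ub : (l0:ℝ) ≤ (N:ℝ)*r/α + 1 := by
    have hnn : 0 ≤ ⌈(N:ℝ)*r/α⌉ := Int.ceil_nonneg hx0
    have h1 : ((⌈(N:ℝ)*r/α⌉).toNat : ℝ) = ((⌈(N:ℝ)*r/α⌉ : ℤ) : ℝ) := by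
      exact_mod_cast Int.toNat_of_nonneg hnn
    rw [hl0def, h1]
    have := Int.ceil_lt_add_one ((N:ℝ)*r/α)
    linarith
  have hrα : r/α ≤ δ/2 := by
    rw [div_le_iff₀ hα0]
    linarith
  have hKub : (K:ℝ) ≤ (N:ℝ)*(δ - r/α) := by
    have hrhs : (0:ℝ) ≤ (N:ℝ)*(δ - r/α) := by
      apply mul_nonneg hNR.le
      linarith
    rcases le_or_gt 0 (⌈Real.log (τ * (1 - β)) / Real.log β⌉) with hk | hk
    · have h1 : ((⌈Real.log (τ * (1 - β)) / Real.log β⌉).toNat : ℝ)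
          = ((⌈Real.log (τ * (1 - β)) / Real.log β⌉ : ℤ) : ℝ) := by
        exact_mod_cast Int.toNat_of_nonneg hk
      rw [hKdef, h1]
      exact hN2
    · have h1 : (⌈Real.log (τ * (1 - β)) / Real.log β⌉).toNat = 0 :=
        Int.toNat_of_nonpos hk.le
      rw [hKdef, h1]
      simpa using hrhs
  have hl0N : l0 ≤ N := by
    have h1 : (l0:ℝ) ≤ (N:ℝ)*(δ/2) + 1 := by
      have : (N:ℝ)*r/α = (N:ℝ)*(r/α) := by ring
      nlinarith [hl0ub, hrα, hNR.le]
    have h2 : (l0:ℝ) < (N:ℝ) + 1 := by nlinarith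
    have : l0 < N + 1 := by exact_mod_cast h2
    omega
  set mh : ℕ := N - l0 with hmhdef
  have hmhcast : (mh:ℝ) = (N:ℝ) - (l0:ℝ) := by
    rw [hmhdef, Nat.cast_sub hl0N]
  have hKmh : K ≤ mh := by
    have h1 : (K:ℝ) + l0 ≤ (N:ℝ)*δ + 1 := by
      have : (N:ℝ)*(δ - r/α) = (N:ℝ)*δ - (N:ℝ)*(r/α) := by ring
      have h2 : (N:ℝ)*r/α = (N:ℝ)*(r/α) := by ring
      nlinarith [hKub, hl0ub]
    have h2 : (N:ℝ)*δ < N := by nlinarith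
    have h3 : (K:ℝ) + l0 < (N:ℝ) + 1 := by linarith
    have h4 : K + l0 < N + 1 := by exact_mod_cast h3
    omega
  -- the per-level geometric decay
  have hstep : ∀ m : ℕ, 1 ≤ m → (N:ℝ)*r ≤ α*((N:ℝ)-m) →
      (∑ v ∈ univ.filter (fun v : UrnState d N => (v.1 i : ℕ) = m - 1), π v)
        ≤ β * ∑ v ∈ univ.filter (fun v : UrnState d N => (v.1 i : ℕ) = m), π v :=
    fun m hm1 hc => step_main i α β hd hN hα0 hα2 hβ hr0 hr1 hrd hN1 hM0 hMsum
      hMlb hMub π hπ0 hπstat m hm1 hc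
  have hgle1 : ∀ m : ℕ,
      (∑ v ∈ univ.filter (fun v : UrnState d N => (v.1 i : ℕ) = m), π v) ≤ 1 := by
    intro m
    rw [← hπ1]
    exact Finset.sum_le_sum_of_subset_of_nonneg (Finset.filter_subset _ _)
      (fun v _ _ => hπ0 v)
  have hchain : ∀ k : ℕ, k ≤ mh →
      (∑ v ∈ univ.filter (fun v : UrnState d N => (v.1 i : ℕ) = mh - k), π v)
        ≤ β ^ k := by
    intro k
    induction k with
    | zero => intro _; simpa using hgle1 mh
    | succ k ih =>
      intro hk
      have hk' : k ≤ mh := by omega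
      have h1 : mh - (k+1) = (mh - k) - 1 := by omega
      have h2 : 1 ≤ mh - k := by omega
      have hcond : (N:ℝ)*r ≤ α*((N:ℝ)-(mh - k : ℕ)) := by
        have hle : ((mh - k : ℕ):ℝ) ≤ (mh:ℝ) := by exact_mod_cast Nat.sub_le mh k
        have h3 : (l0:ℝ) ≤ (N:ℝ) - ((mh - k : ℕ):ℝ) := by
          linarith [hmhcast, hle]
        have h4 : (N:ℝ)*r ≤ α * l0 := by
          rw [div_le_iff₀ hα0] at hl0lb
          linarith [hl0lb]
        calc (N:ℝ)*r ≤ α * l0 := h4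
          _ ≤ α*((N:ℝ)-(mh - k : ℕ)) := by
              apply mul_le_mul_of_nonneg_left h3 hα0.le
      rw [h1]
      calc (∑ v ∈ univ.filter
            (fun v : UrnState d N => (v.1 i : ℕ) = (mh - k) - 1), π v)
          ≤ β * ∑ v ∈ univ.filter
            (fun v : UrnState d N => (v.1 i : ℕ) = mh - k), π v :=
            hstep (mh - k) h2 hcond
        _ ≤ β * β ^ k := mul_le_mul_of_nonneg_left (ih hk') hβ0.le
        _ = β ^ (k+1) := by ring
  have hglev : ∀ m : ℕ, m ≤ mh →
      (∑ v ∈ univ.filter (fun v : UrnState d N => (v.1 i : ℕ) = m), π v)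
        ≤ β ^ (mh - m) := by
    intro m hm
    have := hchain (mh - m) (Nat.sub_le mh m)
    have h1 : mh - (mh - m) = m := by omega
    rw [h1] at this
    exact this
  have h1β : (0:ℝ) < 1 - β := by linarith
  have htail : ∀ m : ℕ, m ≤ mh →
      (∑ v ∈ univ.filter (fun v : UrnState d N => (v.1 i : ℕ) < m + 1), π v)
        ≤ β ^ (mh - m) / (1 - β) := by
    intro m
    induction m with
    | zero =>
      intro _
      have hfe : univ.filter (fun v : UrnState d N => (v.1 i : ℕ) < 1)
          = univ.filter (fun v : UrnState d N => (v.1 i : ℕ) = 0) := by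
        apply Finset.filter_congr
        intro v _
        constructor <;> (intro; omega)
      rw [hfe]
      have := hglev 0 (Nat.zero_le _)
      calc (∑ v ∈ univ.filter (fun v : UrnState d N => (v.1 i : ℕ) = 0), π v)
          ≤ β ^ (mh - 0) := this
        _ ≤ β ^ (mh - 0) / (1 - β) := by
            rw [le_div_iff₀ h1β]
            have hp : (0:ℝ) ≤ β ^ (mh - 0) := pow_nonneg hβ0.le _
            nlinarith
    | succ m ih =>
      intro hm
      have hm' : m ≤ mh := by omega
      have hsplit : (∑ v ∈ univ.filter
            (fun v : UrnState d N => (v.1 i : ℕ) < m + 2), π v)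
          = (∑ v ∈ univ.filter (fun v : UrnState d N => (v.1 i : ℕ) < m + 1), π v)
            + ∑ v ∈ univ.filter (fun v : UrnState d N => (v.1 i : ℕ) = m + 1), π v := by
        rw [← Finset.sum_filter_add_sum_filter_not
          (univ.filter (fun v : UrnState d N => (v.1 i : ℕ) < m + 2))
          (fun v : UrnState d N => (v.1 i : ℕ) < m + 1)]
        congr 1
        · rw [Finset.filter_filter]
          apply Finset.sum_congr _ (fun _ _ => rfl)
          apply Finset.filter_congr
          intro v _
          constructor
          · rintro ⟨_, h⟩; exact h
          · intro h; exact ⟨by omega, h⟩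
        · rw [Finset.filter_filter]
          apply Finset.sum_congr _ (fun _ _ => rfl)
          apply Finset.filter_congr
          intro v _
          constructor
          · rintro ⟨h1, h2⟩; omega
          · intro h; constructor <;> omega
      rw [hsplit]
      have e1 := ih hm'
      have e2 := hglev (m+1) hm
      have heq : mh - m = (mh - (m+1)) + 1 := by omega
      set e := mh - (m+1) with he
      rw [heq] at e1
      have hpe : (0:ℝ) ≤ β ^ e := pow_nonneg hβ0.le _
      have : β ^ (e+1) / (1-β) + β ^ e = β ^ e / (1-β) := by
        rw [pow_succ]
        field_simp
        ring
      linarith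
  set mlo : ℕ := mh - K with hmlodef
  have hmlo_mh : mlo ≤ mh := Nat.sub_le _ _
  have hmhK : mh - mlo = K := by omega
  have hT := htail mlo hmlo_mh
  rw [hmhK] at hT
  -- β^K ≤ τ(1-β)
  have hβK : β ^ K ≤ τ * (1 - β) := by
    have htb0 : 0 < τ * (1-β) := mul_pos hτ h1β
    have htb1 : τ * (1-β) < 1 := by nlinarith
    have hlogβ : Real.log β < 0 := Real.log_neg hβ0 hβ1
    have hlogt : Real.log (τ * (1-β)) < 0 := Real.log_neg htb0 htb1
    have hKge : Real.log (τ * (1-β)) / Real.log β ≤ (K:ℝ) := by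
      have h1 := Int.le_ceil (Real.log (τ * (1-β)) / Real.log β)
      have h2 : ((⌈Real.log (τ * (1-β)) / Real.log β⌉ : ℤ) : ℝ)
          ≤ ((⌈Real.log (τ * (1-β)) / Real.log β⌉).toNat : ℝ) := by
        exact_mod_cast Int.self_le_toNat _
      rw [hKdef]
      linarith
    have hmul : (K:ℝ) * Real.log β ≤ Real.log (τ * (1-β)) := by
      rw [div_le_iff_of_neg hlogβ] at hKge
      linarith
    have hpow : β ^ K = Real.exp ((K:ℝ) * Real.log β) := by
      rw [← Real.log_pow]
      rw [Real.exp_log (pow_pos hβ0 K)]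
    rw [hpow]
    calc Real.exp ((K:ℝ) * Real.log β) ≤ Real.exp (Real.log (τ * (1-β))) :=
          Real.exp_le_exp.mpr hmul
      _ = τ * (1-β) := Real.exp_log htb0
  have hTτ : (∑ v ∈ univ.filter (fun v : UrnState d N => (v.1 i : ℕ) < mlo + 1), π v)
      ≤ τ := by
    calc (∑ v ∈ univ.filter (fun v : UrnState d N => (v.1 i : ℕ) < mlo + 1), π v)
        ≤ β ^ K / (1-β) := hT
      _ ≤ τ := by rw [div_le_iff₀ h1β]; linarith
  -- the bad set is contained in the tail
  have hmlocast : (N:ℝ)*(1-δ) - 1 ≤ (mlo:ℝ) := by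
    have h1 : (mlo:ℝ) = (mh:ℝ) - (K:ℝ) := by
      rw [hmlodef, Nat.cast_sub hKmh]
    rw [h1, hmhcast]
    have h2 : (N:ℝ)*(δ - r/α) = (N:ℝ)*δ - (N:ℝ)*(r/α) := by ring
    have h3 : (N:ℝ)*r/α = (N:ℝ)*(r/α) := by ring
    nlinarith [hKub, hl0ub]
  have hbad : (∑ v ∈ univ.filter
        (fun v : UrnState d N => ¬ (1 - δ ≤ (v.1 i : ℝ) / N)), π v)
      ≤ ∑ v ∈ univ.filter (fun v : UrnState d N => (v.1 i : ℕ) < mlo + 1), π v := by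
    apply Finset.sum_le_sum_of_subset_of_nonneg
    · intro v hv
      simp only [mem_filter, mem_univ, true_and] at hv ⊢
      push_neg at hv
      have h1 : ((v.1 i : ℕ):ℝ) < (N:ℝ)*(1-δ) := by
        rw [div_lt_iff₀ hNR] at hv
        linarith
      have h2 : ((v.1 i : ℕ):ℝ) < (mlo:ℝ) + 1 := by linarith
      exact_mod_cast h2
    · intro v _ _
      exact hπ0 v
  have hsplitall := Finset.sum_filter_add_sum_filter_not
    (univ : Finset (UrnState d N)) (fun v => 1 - δ ≤ (v.1 i : ℝ) / N) π
  rw [hπ1] at hsplitall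
  linarith [hbad, hTτ, hsplitall]
end
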